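/- Let Ω ⊆ ℝⁿ (n ≥ 2) be open, let p : closure(Ω) → [1,∞) be log-Hölder continuous with p⁺ < n, let r : Ω → ℝ be bounded, and let a ∈ L^∞(Ω) with a ≥ 0. Define Φ and Ψ as in the context and assume the embedding hypothesis. If r(x) ≥ 0 for at least one x ∈ Ω (equivalently: either r ≥ 0 everywhere on Ω, or r attains both negative and nonnegative values on Ω), then Ω satisfies the log-measure density condition: there exist constants c > 0 and α > 0 such that |B_R(x) ∩ Ω| ≥ c Rⁿ (log(1/R))^{−α} for every x ∈ closure(Ω) and every R ∈ (0, 1/2]. -/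

import Mathlib

open MeasureTheory Set
open scoped ENNReal

/-- The function `Φ(x,t) = t^{p(x)} + a(x) t^{p(x)} (log(e+t))^{r(x)}`. -/
noncomputable def Phi2 {n : ℕ} (p r a : EuclideanSpace ℝ (Fin n) → ℝ)
    (x : EuclideanSpace ℝ (Fin n)) (t : ℝ) : ℝ :=
  t ^ p x + a x * t ^ p x * (Real.log (Real.exp 1 + t)) ^ r x

/-- The Sobolev conjugate exponent `p*(x) = (1/p(x) − 1/n)⁻¹`. -/
noncomputable def pStar (n : ℕ) (p : EuclideanSpace ℝ (Fin n) → ℝ)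
    (x : EuclideanSpace ℝ (Fin n)) : ℝ :=
  (1 / p x - 1 / (n : ℝ))⁻¹

/-- The function
`Ψ(x,t) = t^{p*(x)} + a(x)^{p*(x)/p(x)} t^{p*(x)}
  (log(e + t/a(x)^{(p(x)−1)/p(x)}))^{r(x)p*(x)/p(x)}`
(with the second term equal to `0` when `a(x) = 0`, as `0^{p*/p} = 0`). -/
noncomputable def Psi {n : ℕ} (p r a : EuclideanSpace ℝ (Fin n) → ℝ)
    (x : EuclideanSpace ℝ (Fin n)) (t : ℝ) : ℝ :=
  t ^ pStar n p x + a x ^ (pStar n p x / p x) * t ^ pStar n p x *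
    (Real.log (Real.exp 1 + t / a x ^ ((p x - 1) / p x))) ^ (r x * pStar n p x / p x)

/-- The Luxemburg (quasi-)norm `‖u‖_{L^Φ(Ω)} = inf{λ > 0 : ∫_Ω Φ(x,|u(x)|/λ) dx ≤ 1}`,
valued in `ℝ≥0∞`, with `inf ∅ = ∞`. -/
noncomputable def luxNorm {n : ℕ} (Ω : Set (EuclideanSpace ℝ (Fin n)))
    (Φ : EuclideanSpace ℝ (Fin n) → ℝ → ℝ)
    (u : EuclideanSpace ℝ (Fin n) → ℝ) : ℝ≥0∞ :=
  sInf ((fun l : ℝ => ENNReal.ofReal l) ''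
    {l : ℝ | 0 < l ∧ (∫⁻ x in Ω, ENNReal.ofReal (Φ x (|u x| / l))) ≤ 1})

namespace Stmt18Aux

open Metric

lemma one_le_logE {t : ℝ} (ht : 0 ≤ t) : 1 ≤ Real.log (Real.exp 1 + t) := by
  have h1 : Real.exp 1 ≤ Real.exp 1 + t := by linarith
  calc (1:ℝ) = Real.log (Real.exp 1) := (Real.log_exp 1).symm
    _ ≤ Real.log (Real.exp 1 + t) := Real.log_le_log (Real.exp_pos 1) h1

lemma logfac_le {β B ρ rp : ℝ} (hβ : 1 ≤ β) (hB : β ≤ B) (hρ : ρ ≤ rp) (hrp : 0 ≤ rp) :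
    β ^ ρ ≤ B ^ rp := by
  rcases le_or_gt ρ 0 with h | h
  · calc β ^ ρ ≤ 1 := Real.rpow_le_one_of_one_le_of_nonpos hβ h
      _ ≤ B ^ rp := Real.one_le_rpow (le_trans hβ hB) hrp
  · calc β ^ ρ ≤ B ^ ρ := Real.rpow_le_rpow (by linarith) hB h.le
      _ ≤ B ^ rp := Real.rpow_le_rpow_of_exponent_le (le_trans hβ hB) hρ

/-- `log L ≤ 2 √L`. -/
lemma log_le_two_sqrt {L : ℝ} (hL : 0 ≤ L) : Real.log L ≤ 2 * Real.sqrt L := by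
  rcases eq_or_lt_of_le hL with h | h
  · simp [← h]
  · have h1 : Real.log (Real.sqrt L) ≤ Real.sqrt L - 1 :=
      Real.log_le_sub_one_of_pos (Real.sqrt_pos.2 h)
    have h2 : Real.log (Real.sqrt L) = Real.log L / 2 := Real.log_sqrt hL
    nlinarith [Real.sqrt_nonneg L]

/-- decay: for `L ≥ 16 α²` (and `α > 0`), `exp(-L) * L ^ α ≤ exp (-L/2)`. -/
lemma exp_decay {L α : ℝ} (hα : 0 < α) (hL : 16 * α ^ 2 ≤ L) :
    Real.exp (-L) * L ^ α ≤ Real.exp (-(L/2)) := by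
  have hL0 : (0:ℝ) ≤ L := le_trans (by positivity) hL
  have h1 : α * Real.log L ≤ L / 2 := by
    have h2 : Real.log L ≤ 2 * Real.sqrt L := log_le_two_sqrt hL0
    have h3 : 4 * α ≤ Real.sqrt L := by
      have : Real.sqrt (16 * α ^ 2) ≤ Real.sqrt L := Real.sqrt_le_sqrt hL
      have h4 : Real.sqrt (16 * α ^ 2) = 4 * α := by
        rw [show (16 : ℝ) * α ^ 2 = (4 * α) ^ 2 by ring]
        exact Real.sqrt_sq (by positivity)
      linarith
    nlinarith [Real.sqrt_nonneg L, Real.sq_sqrt hL0, hα.le]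
  rcases eq_or_lt_of_le hL0 with h | hL0'
  · rw [← h]
    rw [Real.zero_rpow hα.ne']
    simp [Real.exp_nonneg]
  · have : L ^ α = Real.exp (α * Real.log L) := by
      rw [Real.rpow_def_of_pos hL0', mul_comm]
    rw [this, ← Real.exp_add]
    apply Real.exp_le_exp.2
    linarith

/-- The rescaled bump package. -/
lemma exists_bump (n : ℕ) :
    ∃ (χ : EuclideanSpace ℝ (Fin n) → ℝ) (M₀ : ℝ), 0 ≤ M₀ ∧ ContDiff ℝ 1 χ ∧
      HasCompactSupport χ ∧ (∀ y, 0 ≤ χ y) ∧ (∀ y, χ y ≤ 1) ∧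
      (∀ y ∈ closedBall (0 : EuclideanSpace ℝ (Fin n)) (1/2), χ y = 1) ∧
      (∀ y, 1 ≤ ‖y‖ → χ y = 0) ∧ (∀ y, ‖fderiv ℝ χ y‖ ≤ M₀) := by
  set E := EuclideanSpace ℝ (Fin n)
  let f : ContDiffBump (0 : E) := ⟨1/2, 1, by norm_num, by norm_num⟩
  have hsupp : HasCompactSupport (f : E → ℝ) := f.hasCompactSupport
  have hcd : ContDiff ℝ 1 (f : E → ℝ) := f.contDiff
  have hfd : HasCompactSupport (fderiv ℝ (f : E → ℝ)) := hsupp.fderiv ℝ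
  have hcont : Continuous (fderiv ℝ (f : E → ℝ)) :=
    (f.contDiff (n := 2)).continuous_fderiv (by norm_num)
  obtain ⟨M₀, hM₀⟩ := hcont.bounded_above_of_compact_support hfd
  refine ⟨f, max M₀ 0, le_max_right _ _, hcd, hsupp, fun y => f.nonneg, fun y => f.le_one,
    fun y hy => f.one_of_mem_closedBall (by exact hy), fun y hy => ?_, fun y => le_trans (by
      simpa using hM₀ y) (le_max_left _ _)⟩
  have hns : y ∉ Function.support (f : E → ℝ) := by
    rw [f.support_eq]
    simp only [mem_ball, dist_zero_right, not_lt]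
    exact hy
  exact Function.notMem_support.mp hns


lemma one_le_logE' {t : ℝ} (ht : 0 ≤ t) : 1 ≤ Real.log (Real.exp 1 + t) := by
  have h1 : Real.exp 1 ≤ Real.exp 1 + t := by linarith
  calc (1:ℝ) = Real.log (Real.exp 1) := (Real.log_exp 1).symm
    _ ≤ Real.log (Real.exp 1 + t) := Real.log_le_log (Real.exp_pos 1) h1

lemma div_le_div_left' {a b c : ℝ} (ha : 0 ≤ a) (hb : 0 < b) (hbc : b ≤ c) : a / c ≤ a / b := by
  have hc : 0 < c := lt_of_lt_of_le hb hbc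
  rw [div_le_div_iff₀ hc hb]
  nlinarith

variable {n : ℕ} {Ω : Set (EuclideanSpace ℝ (Fin n))} {p : EuclideanSpace ℝ (Fin n) → ℝ}
  {Clog : ℝ}

/-- Global oscillation bound: log-Hölder functions vary by at most `Clog`. -/
lemma p_osc_global (hClog : 0 < Clog)
    (hpLH : ∀ x ∈ closure Ω, ∀ y ∈ closure Ω, x ≠ y →
      |p x - p y| ≤ Clog / Real.log (Real.exp 1 + 1 / dist x y))
    {x y : EuclideanSpace ℝ (Fin n)} (hx : x ∈ closure Ω) (hy : y ∈ closure Ω) :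
    |p x - p y| ≤ Clog := by
  rcases eq_or_ne x y with rfl | hne
  · rw [sub_self, abs_zero]; exact hClog.le
  · calc |p x - p y| ≤ Clog / Real.log (Real.exp 1 + 1 / dist x y) := hpLH x hx y hy hne
      _ ≤ Clog / 1 := div_le_div_left' hClog.le zero_lt_one (one_le_logE' (by positivity))
      _ = Clog := div_one _

/-- Local oscillation bound at scale `ρ`. -/
lemma p_osc_local (hClog : 0 < Clog)
    (hpLH : ∀ x ∈ closure Ω, ∀ y ∈ closure Ω, x ≠ y →
      |p x - p y| ≤ Clog / Real.log (Real.exp 1 + 1 / dist x y))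
    {x y : EuclideanSpace ℝ (Fin n)} (hx : x ∈ closure Ω) (hy : y ∈ closure Ω)
    {ρ : ℝ} (hρ0 : 0 < ρ) (hρ1 : ρ ≤ 1/2) (hd : dist y x ≤ ρ) :
    |p y - p x| ≤ Clog / Real.log (1/ρ) := by
  have hlogρ : 0 < Real.log (1/ρ) := by
    apply Real.log_pos
    rw [lt_div_iff₀ hρ0]
    linarith
  rcases eq_or_ne y x with rfl | hne
  · rw [sub_self, abs_zero]
    exact div_nonneg hClog.le hlogρ.le
  · have hd0 : 0 < dist y x := dist_pos.2 hne
    calc |p y - p x| ≤ Clog / Real.log (Real.exp 1 + 1 / dist y x) := hpLH y hy x hx hne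
      _ ≤ Clog / Real.log (1/ρ) := by
          apply div_le_div_left' hClog.le hlogρ
          apply Real.log_le_log (by positivity)
          have h1 : 1 / ρ ≤ 1 / dist y x := div_le_div_left' zero_le_one hd0 hd
          have h2 : 0 < Real.exp 1 := Real.exp_pos 1
          linarith

/-- On the closure, `p` is bounded by the sup over `Ω`. -/
lemma p_le_sSup (hClog : 0 < Clog)
    (hpLH : ∀ x ∈ closure Ω, ∀ y ∈ closure Ω, x ≠ y →
      |p x - p y| ≤ Clog / Real.log (Real.exp 1 + 1 / dist x y))
    (hBdd : BddAbove (p '' Ω))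
    {x : EuclideanSpace ℝ (Fin n)} (hx : x ∈ closure Ω) :
    p x ≤ sSup (p '' Ω) := by
  apply le_of_forall_pos_le_add
  intro η hη
  have hδ : (0:ℝ) < (Real.exp (Clog/η))⁻¹ := by positivity
  obtain ⟨z, hzΩ, hdz⟩ := Metric.mem_closure_iff.1 hx _ hδ
  have hz : p z ≤ sSup (p '' Ω) := le_csSup hBdd (mem_image_of_mem p hzΩ)
  rcases eq_or_ne x z with rfl | hne
  · linarith
  · have hd0 : 0 < dist x z := dist_pos.2 hne
    have h1 : |p x - p z| ≤ Clog / Real.log (Real.exp 1 + 1 / dist x z) :=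
      hpLH x hx z (subset_closure hzΩ) hne
    have h2 : Clog / η ≤ Real.log (Real.exp 1 + 1 / dist x z) := by
      calc Clog / η = Real.log (Real.exp (Clog / η)) := (Real.log_exp _).symm
        _ ≤ Real.log (Real.exp 1 + 1 / dist x z) := by
            apply Real.log_le_log (Real.exp_pos _)
            have h3 : Real.exp (Clog/η) ≤ 1 / dist x z := by
              rw [le_div_iff₀ hd0]
              have h5 := mul_lt_mul_of_pos_left hdz (Real.exp_pos (Clog/η))
              rw [mul_inv_cancel₀ (ne_of_gt (Real.exp_pos _))] at h5
              linarith
            have h4 : (0:ℝ) < Real.exp 1 := Real.exp_pos 1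
            linarith
    have h5 : Clog / Real.log (Real.exp 1 + 1 / dist x z) ≤ η := by
      have he : Clog / (Clog/η) = η := by field_simp
      calc Clog / Real.log (Real.exp 1 + 1 / dist x z) ≤ Clog / (Clog/η) :=
            div_le_div_left' hClog.le (by positivity) h2
        _ = η := he
    have h6 := (abs_le.1 (le_trans h1 h5)).2
    linarith


set_option maxHeartbeats 1000000 in
/-- Scaled bump adapted to `closedBall x ρ`. -/
lemma exists_scaled_bump {χ : EuclideanSpace ℝ (Fin n) → ℝ} {M₀ : ℝ}
    (hM₀ : 0 ≤ M₀) (hcd : ContDiff ℝ 1 χ)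
    (h1 : ∀ y ∈ closedBall (0 : EuclideanSpace ℝ (Fin n)) (1/2), χ y = 1)
    (h0 : ∀ y, 1 ≤ ‖y‖ → χ y = 0)
    (hn0 : ∀ y, 0 ≤ χ y) (hle1 : ∀ y, χ y ≤ 1)
    (hfd : ∀ y, ‖fderiv ℝ χ y‖ ≤ M₀)
    (x : EuclideanSpace ℝ (Fin n)) {ρ : ℝ} (hρ : 0 < ρ) :
    ∃ u : EuclideanSpace ℝ (Fin n) → ℝ, ContDiff ℝ 1 u ∧ HasCompactSupport u ∧
      (∀ y, 0 ≤ u y) ∧ (∀ y, u y ≤ 1) ∧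
      (∀ y ∈ closedBall x (ρ/2), u y = 1) ∧
      (∀ y, y ∉ closedBall x ρ → u y = 0) ∧
      (∀ y, ‖fderiv ℝ u y‖ ≤ M₀ / ρ) ∧
      (∀ y, y ∉ closedBall x ρ → fderiv ℝ u y = 0) := by
  have hnormg : ∀ y : EuclideanSpace ℝ (Fin n), ‖ρ⁻¹ • (y - x)‖ = ‖y - x‖ / ρ := by
    intro y
    simp only [norm_smul, norm_inv, Real.norm_eq_abs, abs_of_pos hρ]
    rw [div_eq_inv_mul]
  have huz : ∀ y, y ∉ closedBall x ρ → χ (ρ⁻¹ • (y - x)) = 0 := by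
    intro y hy
    apply h0
    rw [hnormg y]
    rw [mem_closedBall, dist_eq_norm, not_le] at hy
    rw [le_div_iff₀ hρ]
    linarith
  have hgd : ∀ y : EuclideanSpace ℝ (Fin n), HasFDerivAt (fun z => ρ⁻¹ • (z - x))
      (ρ⁻¹ • ContinuousLinearMap.id ℝ (EuclideanSpace ℝ (Fin n))) y := fun y =>
    ((hasFDerivAt_id y).sub_const x).const_smul ρ⁻¹
  have hgc : ContDiff ℝ 1 (fun z : EuclideanSpace ℝ (Fin n) => ρ⁻¹ • (z - x)) :=
    (contDiff_id.sub contDiff_const).const_smul ρ⁻¹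
  have hucd : ContDiff ℝ 1 (fun y => χ (ρ⁻¹ • (y - x))) := hcd.comp hgc
  have hud : ∀ y : EuclideanSpace ℝ (Fin n), HasFDerivAt (fun y => χ (ρ⁻¹ • (y - x)))
      ((fderiv ℝ χ (ρ⁻¹ • (y - x))).comp
        (ρ⁻¹ • ContinuousLinearMap.id ℝ (EuclideanSpace ℝ (Fin n)))) y := by
    intro y
    exact HasFDerivAt.comp y ((hcd.differentiable one_ne_zero (ρ⁻¹ • (y - x))).hasFDerivAt) (hgd y)
  have hnid : ‖ρ⁻¹ • ContinuousLinearMap.id ℝ (EuclideanSpace ℝ (Fin n))‖ ≤ ρ⁻¹ := by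
    apply ContinuousLinearMap.opNorm_le_bound _ (by positivity)
    intro z
    simp only [ContinuousLinearMap.smul_apply, ContinuousLinearMap.id_apply, norm_smul,
      norm_inv, Real.norm_eq_abs, abs_of_pos hρ]
    exact le_refl _
  refine ⟨fun y => χ (ρ⁻¹ • (y - x)), hucd,
    HasCompactSupport.intro (isCompact_closedBall x ρ) huz,
    fun y => hn0 _, fun y => hle1 _, ?_, huz, ?_, ?_⟩
  · intro y hy
    apply h1
    rw [mem_closedBall, dist_zero_right, hnormg y, div_le_iff₀ hρ]
    rw [mem_closedBall, dist_eq_norm] at hy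
    linarith
  · intro y
    rw [(hud y).fderiv]
    calc ‖(fderiv ℝ χ (ρ⁻¹ • (y - x))).comp
          (ρ⁻¹ • ContinuousLinearMap.id ℝ (EuclideanSpace ℝ (Fin n)))‖
        ≤ ‖fderiv ℝ χ (ρ⁻¹ • (y - x))‖ *
            ‖ρ⁻¹ • ContinuousLinearMap.id ℝ (EuclideanSpace ℝ (Fin n))‖ :=
          ContinuousLinearMap.opNorm_comp_le _ _
      _ ≤ M₀ * ρ⁻¹ := mul_le_mul (hfd _) hnid (norm_nonneg _) hM₀
      _ = M₀ / ρ := by rw [div_eq_mul_inv]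
  · intro y hy
    rw [mem_closedBall, not_le] at hy
    have hev : (fun y => χ (ρ⁻¹ • (y - x))) =ᶠ[nhds y] (fun _ => (0:ℝ)) := by
      have hob : IsOpen (ball y (dist y x - ρ)) := isOpen_ball
      have hyb : y ∈ ball y (dist y x - ρ) := by
        rw [mem_ball, dist_self]; linarith
      filter_upwards [hob.mem_nhds hyb] with z hz
      apply huz
      rw [mem_ball] at hz
      rw [mem_closedBall, not_le]
      have h3 : dist y x ≤ dist y z + dist z x := dist_triangle y z x
      have h4 : dist y z = dist z y := dist_comm y z
      linarith
    calc fderiv ℝ (fun y => χ (ρ⁻¹ • (y - x))) y = fderiv ℝ (fun _ => (0:ℝ)) y := hev.fderiv_eq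
      _ = 0 := fderiv_const_apply 0


lemma luxNorm_le {Ω : Set (EuclideanSpace ℝ (Fin n))} {Φ : EuclideanSpace ℝ (Fin n) → ℝ → ℝ}
    {u : EuclideanSpace ℝ (Fin n) → ℝ} {lam : ℝ} (hlam : 0 < lam)
    (h : (∫⁻ x in Ω, ENNReal.ofReal (Φ x (|u x| / lam))) ≤ 1) :
    luxNorm Ω Φ u ≤ ENNReal.ofReal lam :=
  sInf_le (mem_image_of_mem _ ⟨hlam, h⟩)

lemma le_luxNorm {Ω : Set (EuclideanSpace ℝ (Fin n))} {Φ : EuclideanSpace ℝ (Fin n) → ℝ → ℝ}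
    {u : EuclideanSpace ℝ (Fin n) → ℝ} {lam₀ : ℝ}
    (h : ∀ l : ℝ, 0 < l → (∫⁻ x in Ω, ENNReal.ofReal (Φ x (|u x| / l))) ≤ 1 → lam₀ ≤ l) :
    ENNReal.ofReal lam₀ ≤ luxNorm Ω Φ u := by
  apply le_sInf
  rintro z ⟨l, ⟨hl0, hl1⟩, rfl⟩
  exact ENNReal.ofReal_le_ofReal (h l hl0 hl1)

/-- Pointwise master bound for `Φ`. -/
lemma Phi2_le {p r a : EuclideanSpace ℝ (Fin n) → ℝ} {y : EuclideanSpace ℝ (Fin n)}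
    {t T A rp pe : ℝ}
    (hp0 : 1 ≤ p y) (hpe : p y ≤ pe) (ha : 0 ≤ a y) (haA : a y ≤ A)
    (hr : r y ≤ rp) (hrp0 : 0 ≤ rp) (ht : 0 ≤ t) (htT : t ≤ T) (hT : 1 ≤ T) :
    Phi2 p r a y t ≤ (1 + A) * (T ^ pe * (Real.log (Real.exp 1 + T)) ^ rp) := by
  have hpe1 : (1:ℝ) ≤ pe := le_trans hp0 hpe
  have h1 : t ^ p y ≤ T ^ pe := by
    rcases le_or_gt t 1 with h | h
    · calc t ^ p y ≤ 1 := Real.rpow_le_one ht h (by linarith)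
        _ ≤ T ^ pe := Real.one_le_rpow hT (by linarith)
    · calc t ^ p y ≤ T ^ p y := Real.rpow_le_rpow ht htT (by linarith)
        _ ≤ T ^ pe := Real.rpow_le_rpow_of_exponent_le (by linarith) hpe
  have hlf : (Real.log (Real.exp 1 + t)) ^ r y ≤ (Real.log (Real.exp 1 + T)) ^ rp := by
    apply logfac_le (one_le_logE ht) ?_ hr hrp0
    apply Real.log_le_log (by positivity)
    linarith
  have hlfT1 : 1 ≤ (Real.log (Real.exp 1 + T)) ^ rp :=
    Real.one_le_rpow (one_le_logE (by linarith)) hrp0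
  have htp0 : 0 ≤ t ^ p y := Real.rpow_nonneg ht _
  have hlf0 : 0 ≤ (Real.log (Real.exp 1 + t)) ^ r y :=
    Real.rpow_nonneg (by linarith [one_le_logE ht]) _
  have hTpe0 : 0 ≤ T ^ pe := Real.rpow_nonneg (by linarith) _
  have h2 : a y * t ^ p y * (Real.log (Real.exp 1 + t)) ^ r y ≤
      A * (T ^ pe * (Real.log (Real.exp 1 + T)) ^ rp) := by
    rw [mul_assoc]
    apply mul_le_mul haA ?_ (by positivity) (le_trans ha haA)
    exact mul_le_mul h1 hlf hlf0 hTpe0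
  have h3 : t ^ p y ≤ T ^ pe * (Real.log (Real.exp 1 + T)) ^ rp := by
    calc t ^ p y ≤ T ^ pe := h1
      _ = T ^ pe * 1 := (mul_one _).symm
      _ ≤ T ^ pe * (Real.log (Real.exp 1 + T)) ^ rp := by
          exact mul_le_mul_of_nonneg_left hlfT1 hTpe0
  unfold Phi2
  nlinarith [h2, h3]

/-- `Φ(y, 0) = 0` when `p y ≥ 1`. -/
lemma Phi2_zero {p r a : EuclideanSpace ℝ (Fin n) → ℝ} {y : EuclideanSpace ℝ (Fin n)}
    (hp0 : 1 ≤ p y) : Phi2 p r a y 0 = 0 := by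
  unfold Phi2
  rw [Real.zero_rpow (by linarith)]
  ring

/-- Modular upper bound via pointwise domination on a closed ball. -/
lemma modular_le_one {Ω : Set (EuclideanSpace ℝ (Fin n))}
    (p r a : EuclideanSpace ℝ (Fin n) → ℝ)
    (hp1 : ∀ y ∈ Ω, 1 ≤ p y) (ha0 : ∀ y ∈ Ω, 0 ≤ a y) {A rp : ℝ}
    (haA : ∀ y ∈ Ω, a y ≤ A) (hrp : ∀ y ∈ Ω, r y ≤ rp) (hrp0 : 0 ≤ rp) (hA0 : 0 ≤ A)
    (hΩm : MeasurableSet Ω)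
    (x : EuclideanSpace ℝ (Fin n)) {ρ pe : ℝ}
    (hpe : ∀ y ∈ Ω ∩ closedBall x ρ, p y ≤ pe) (hpe1 : 1 ≤ pe)
    (v : EuclideanSpace ℝ (Fin n) → ℝ) {lam V : ℝ} (hlam : 0 < lam)
    (hvV : ∀ y, |v y| ≤ V)
    (hvz : ∀ y, y ∉ closedBall x ρ → v y = 0)
    {T : ℝ} (hT1 : 1 ≤ T) (hTV : V / lam ≤ T)
    (hkey : (1 + A) * (T ^ pe * (Real.log (Real.exp 1 + T)) ^ rp) *
      (volume (closedBall x ρ ∩ Ω)).toReal ≤ 1) :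
    (∫⁻ y in Ω, ENNReal.ofReal (Phi2 p r a y (|v y| / lam))) ≤ 1 := by
  set C : ℝ := (1 + A) * (T ^ pe * (Real.log (Real.exp 1 + T)) ^ rp) with hC
  have hC0 : 0 ≤ C := by
    have := Real.rpow_nonneg (le_trans zero_le_one hT1) pe
    have h1 : (0:ℝ) ≤ (Real.log (Real.exp 1 + T)) ^ rp :=
      Real.rpow_nonneg (by linarith [one_le_logE (le_trans zero_le_one hT1)]) _
    positivity
  have hpt : ∀ y ∈ Ω, ENNReal.ofReal (Phi2 p r a y (|v y| / lam)) ≤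
      (closedBall x ρ).indicator (fun _ => ENNReal.ofReal C) y := by
    intro y hy
    by_cases hyB : y ∈ closedBall x ρ
    · rw [indicator_of_mem hyB]
      apply ENNReal.ofReal_le_ofReal
      apply Phi2_le (hp1 y hy) (hpe y ⟨hy, hyB⟩) (ha0 y hy) (haA y hy) (hrp y hy) hrp0
        (by positivity) ?_ hT1
      calc |v y| / lam ≤ V / lam := by
            gcongr
            exact hvV y
        _ ≤ T := hTV
    · rw [indicator_of_notMem hyB, hvz y hyB]
      simp only [abs_zero, zero_div]
      rw [Phi2_zero (hp1 y hy)]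
      simp
  calc (∫⁻ y in Ω, ENNReal.ofReal (Phi2 p r a y (|v y| / lam)))
      ≤ ∫⁻ y in Ω, (closedBall x ρ).indicator (fun _ => ENNReal.ofReal C) y := by
        apply lintegral_mono_ae
        exact (ae_restrict_iff' hΩm).2 (Filter.Eventually.of_forall hpt)
    _ = ENNReal.ofReal C * volume (closedBall x ρ ∩ Ω) := by
        rw [lintegral_indicator (measurableSet_closedBall)]
        rw [setLIntegral_const, Measure.restrict_apply measurableSet_closedBall]
    _ ≤ 1 := by
        have hfin : volume (closedBall x ρ ∩ Ω) ≠ ⊤ := by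
          apply ne_of_lt
          exact lt_of_le_of_lt (measure_mono (inter_subset_left)) measure_closedBall_lt_top
        rw [← ENNReal.ofReal_toReal hfin, ← ENNReal.ofReal_mul hC0]
        exact ENNReal.ofReal_le_one.2 hkey
  
/-- Lower bound on admissible `Ψ`-levels. -/
lemma psi_admissible_ge {Ω : Set (EuclideanSpace ℝ (Fin n))} (hΩo : IsOpen Ω)
    (p r a : EuclideanSpace ℝ (Fin n) → ℝ)
    (x : EuclideanSpace ℝ (Fin n)) {ρ b : ℝ} (hρ : 0 < ρ) (hb : 1 ≤ b)
    (ha0 : ∀ y ∈ Ω, 0 ≤ a y)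
    (hbp : ∀ y ∈ ball x (ρ/2) ∩ Ω, b ≤ pStar n p y)
    {u : EuclideanSpace ℝ (Fin n) → ℝ} (hu1 : ∀ y ∈ closedBall x (ρ/2), u y = 1)
    {m' : ℝ} (hm' : volume (ball x (ρ/2) ∩ Ω) = ENNReal.ofReal m') (hm'0 : 0 < m')
    (hm'1 : m' ≤ 1)
    {l : ℝ} (hl : 0 < l)
    (hint : (∫⁻ y in Ω, ENNReal.ofReal (Psi p r a y (|u y| / l))) ≤ 1) :
    m' ^ (1/b) ≤ l := by
  have hb0 : 0 < b := by linarith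
  rcases le_or_gt 1 l with hl1 | hl1
  · calc m' ^ (1/b) ≤ 1 := Real.rpow_le_one hm'0.le hm'1 (by positivity)
      _ ≤ l := hl1
  -- l < 1
  set S : Set (EuclideanSpace ℝ (Fin n)) := ball x (ρ/2) ∩ Ω with hS
  have hSmeas : MeasurableSet S := (isOpen_ball.inter hΩo).measurableSet
  have hinvl : 1 ≤ 1 / l := by
    rw [le_div_iff₀ hl]; linarith
  have hptS : ∀ y ∈ S, ENNReal.ofReal ((1/l) ^ b) ≤ ENNReal.ofReal (Psi p r a y (|u y| / l)) := by
    intro y hy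
    have hyΩ : y ∈ Ω := hy.2
    have hu : u y = 1 := hu1 y (ball_subset_closedBall hy.1)
    rw [hu]
    apply ENNReal.ofReal_le_ofReal
    have habs : |(1:ℝ)| / l = 1/l := by rw [abs_one]
    rw [habs]
    have h1 : (1/l) ^ b ≤ (1/l) ^ pStar n p y :=
      Real.rpow_le_rpow_of_exponent_le hinvl (hbp y hy)
    have h2 : (1/l) ^ pStar n p y ≤ Psi p r a y (1/l) := by
      unfold Psi
      have ht0 : (0:ℝ) ≤ 1/l := by positivity
      have hden : (0:ℝ) ≤ a y ^ ((p y - 1)/ p y) := Real.rpow_nonneg (ha0 y hyΩ) _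
      have hz : (0:ℝ) ≤ 1/l / a y ^ ((p y - 1)/ p y) := div_nonneg ht0 hden
      have hterm : 0 ≤ a y ^ (pStar n p y / p y) * (1/l) ^ pStar n p y *
          (Real.log (Real.exp 1 + 1/l / a y ^ ((p y - 1) / p y))) ^
            (r y * pStar n p y / p y) := by
        apply mul_nonneg
        apply mul_nonneg (Real.rpow_nonneg (ha0 y hyΩ) _) (Real.rpow_nonneg ht0 _)
        exact Real.rpow_nonneg (by linarith [one_le_logE hz]) _
      linarith
    linarith
  have hchain : ENNReal.ofReal ((1/l) ^ b) * ENNReal.ofReal m' ≤ 1 := by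
    calc ENNReal.ofReal ((1/l) ^ b) * ENNReal.ofReal m'
        = ∫⁻ y in S, ENNReal.ofReal ((1/l) ^ b) := by
          rw [setLIntegral_const, hm']
      _ ≤ ∫⁻ y in S, ENNReal.ofReal (Psi p r a y (|u y| / l)) := by
          apply lintegral_mono_ae
          exact (ae_restrict_iff' hSmeas).2 (Filter.Eventually.of_forall hptS)
      _ ≤ ∫⁻ y in Ω, ENNReal.ofReal (Psi p r a y (|u y| / l)) := by
          apply lintegral_mono' (Measure.restrict_mono ?_ le_rfl) (le_refl _)
          exact inter_subset_right
      _ ≤ 1 := hint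
  have hreal : (1/l) ^ b * m' ≤ 1 := by
    rw [← ENNReal.ofReal_le_one, ENNReal.ofReal_mul (Real.rpow_nonneg (by positivity) _)]
    exact hchain
  have h4 : (1/l) ^ b ≤ m'⁻¹ := by
    rw [← one_div]
    rw [le_div_iff₀ hm'0]
    exact hreal
  have h5 : 1/l ≤ (m'⁻¹) ^ (1/b) := by
    calc 1/l = ((1/l) ^ b) ^ (1/b) := by
          rw [one_div b, Real.rpow_rpow_inv (by positivity) (ne_of_gt hb0)]
      _ ≤ (m'⁻¹) ^ (1/b) := Real.rpow_le_rpow (Real.rpow_nonneg (by positivity) _) h4 (by positivity)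
  have h6 : (m'⁻¹) ^ (1/b) = (m' ^ (1/b))⁻¹ := Real.inv_rpow hm'0.le _
  rw [h6, one_div] at h5
  have h7 : (0:ℝ) < m' ^ (1/b) := Real.rpow_pos_of_pos hm'0 _
  have h8 : m' ^ (1/b) * l * ((m' ^ (1/b))⁻¹ - l⁻¹) = l - m' ^ (1/b) := by
    field_simp
  nlinarith [mul_nonneg (mul_pos h7 hl).le (sub_nonneg.2 h5)]


lemma inv_ge_one {θ : ℝ} (h0 : 0 < θ) (h1 : θ ≤ 1) : 1 ≤ θ⁻¹ := by
  nlinarith [mul_inv_cancel₀ (ne_of_gt h0), inv_pos.2 h0]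

lemma inv_anti {c θ : ℝ} (h0 : 0 < c) (h : c ≤ θ) : θ⁻¹ ≤ c⁻¹ := by
  have hθ : 0 < θ := lt_of_lt_of_le h0 h
  nlinarith [mul_inv_cancel₀ (ne_of_gt h0), mul_inv_cancel₀ (ne_of_gt hθ), inv_pos.2 h0,
    inv_pos.2 hθ]

lemma pStar_eq {p : EuclideanSpace ℝ (Fin n) → ℝ} {y : EuclideanSpace ℝ (Fin n)}
    (h1 : 0 < p y) (h2 : p y < n) : pStar n p y = n * p y / ((n:ℝ) - p y) := by
  have hn0 : (0:ℝ) < n := lt_trans h1 h2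
  unfold pStar
  have h3 : 1 / p y - 1 / (n:ℝ) = ((n:ℝ) - p y) / ((n:ℝ) * p y) := by
    rw [div_sub_div 1 1 (ne_of_gt h1) (ne_of_gt hn0)]
    rw [one_mul, mul_one]
    congr 1
    exact mul_comm _ _
  rw [h3, inv_div]

lemma euclidean_nontrivial (hn : 1 ≤ n) : Nontrivial (EuclideanSpace ℝ (Fin n)) := by
  refine ⟨0, EuclideanSpace.single ⟨0, hn⟩ 1, fun h => ?_⟩
  have h2 := congrArg (fun v : EuclideanSpace ℝ (Fin n) => v ⟨0, hn⟩) h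
  simp [EuclideanSpace.single_apply] at h2

lemma vol_cb_inter (hn : 2 ≤ n) (x : EuclideanSpace ℝ (Fin n)) (ρ : ℝ)
    (Ω : Set (EuclideanSpace ℝ (Fin n))) :
    volume (closedBall x ρ ∩ Ω) = volume (ball x ρ ∩ Ω) := by
  haveI := euclidean_nontrivial (le_trans one_le_two hn)
  apply le_antisymm
  · calc volume (closedBall x ρ ∩ Ω) ≤ volume ((ball x ρ ∩ Ω) ∪ sphere x ρ) := by
          apply measure_mono
          rintro y ⟨hy1, hy2⟩
          rw [← ball_union_sphere] at hy1
          rcases hy1 with h | h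
          · exact Or.inl ⟨h, hy2⟩
          · exact Or.inr h
      _ ≤ volume (ball x ρ ∩ Ω) + volume (sphere x ρ) := measure_union_le _ _
      _ = volume (ball x ρ ∩ Ω) := by
          rw [Measure.addHaar_sphere volume x ρ, add_zero]
  · exact measure_mono (inter_subset_inter ball_subset_closedBall (subset_refl _))


set_option maxHeartbeats 2000000 in
/-- The inductive step: if the density is small at scale `ρ`, it stays small at `ρ/2`. -/
lemma step_lemma (hn : 2 ≤ n)
    {Ω : Set (EuclideanSpace ℝ (Fin n))} (hΩo : IsOpen Ω)
    {p r a : EuclideanSpace ℝ (Fin n) → ℝ}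
    (hp1 : ∀ x ∈ closure Ω, 1 ≤ p x)
    {Clog : ℝ} (hClog : 0 < Clog)
    (hpLH : ∀ x ∈ closure Ω, ∀ y ∈ closure Ω, x ≠ y →
      |p x - p y| ≤ Clog / Real.log (Real.exp 1 + 1 / dist x y))
    {pp : ℝ} (hpp1 : 1 ≤ pp) (hppn : pp < n) (hpple : ∀ y ∈ closure Ω, p y ≤ pp)
    {rp : ℝ} (hrp0 : 0 ≤ rp) (hrple : ∀ y ∈ Ω, r y ≤ rp)
    {A : ℝ} (hA0 : 0 ≤ A) (hAle : ∀ y ∈ Ω, a y ≤ A) (ha0 : ∀ y ∈ Ω, 0 ≤ a y)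
    {c₁ : ℝ} (hc₁ : 1 ≤ c₁)
    (hemb : ∀ u : EuclideanSpace ℝ (Fin n) → ℝ, ContDiff ℝ 1 u → HasCompactSupport u →
      luxNorm Ω (Psi p r a) u ≤ ENNReal.ofReal c₁ * (luxNorm Ω (Phi2 p r a) u +
          luxNorm Ω (Phi2 p r a) (fun x => ‖fderiv ℝ u x‖)))
    {χ : EuclideanSpace ℝ (Fin n) → ℝ} {M₀ : ℝ}
    (hM₀0 : 0 ≤ M₀) (hχcd : ContDiff ℝ 1 χ)
    (hχ1 : ∀ y ∈ closedBall (0 : EuclideanSpace ℝ (Fin n)) (1/2), χ y = 1)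
    (hχ0 : ∀ y, 1 ≤ ‖y‖ → χ y = 0)
    (hχn0 : ∀ y, 0 ≤ χ y) (hχle1 : ∀ y, χ y ≤ 1)
    (hχfd : ∀ y, ‖fderiv ℝ χ y‖ ≤ M₀)
    {M : ℝ} (hM1 : 1 ≤ M) (hM₀M : M₀ ≤ M)
    {CL : ℝ} (hCL : CL = (n:ℝ)^2/((n:ℝ)-pp)^2)
    {Pb : ℝ} (hPb : (n:ℝ)*pp/((n:ℝ)-pp) ≤ Pb) (hPb0 : 0 ≤ Pb)
    {α : ℝ} (hα0 : 0 < α) (hαrp : rp ≤ α)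
    (hα2 : α + 2 ≤ (α - rp) * (1 + 1/(2*(n:ℝ)*((n:ℝ)-1))))
    {εh : ℝ} (hεh1 : 0 < εh) (hεh2 : εh ≤ ((n:ℝ)-pp)/2)
    (hεh3 : εh * (2*(CL+1)) ≤ 1/((n:ℝ)-1))
    {CG : ℝ} (hCG : Real.log (Real.exp 1 + 1) + (n:ℝ) + 1 ≤ CG) (hCG0 : 0 ≤ CG)
    {D : ℝ} (hD1 : 1 ≤ D) (hD2 : (1+A) * CG ^ rp ≤ D)
    {ε₀ : ℝ} (hε₀0 : 0 < ε₀) (hε₀1 : ε₀ ≤ 1) (hε₀D : D * ε₀ ≤ 1)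
    {CF : ℝ} (hCF : (n:ℝ)*(Pb + CL) ≤ CF) (hCF0 : 0 ≤ CF)
    {K₁ : ℝ} (hK₁ : (2*c₁*M) ^ Pb ≤ K₁)
    {K₂ : ℝ} (hK₂ : Real.exp (CF * Clog) ≤ K₂)
    {Lh : ℝ} (hLh1 : 1 ≤ Lh) (hLh2 : Clog ≤ Lh * εh)
    (hLh3 : (2:ℝ)^((n:ℝ)+α) * (K₁ * K₂ * D) ≤ Lh * Lh)
    (hLh4 : 16*α^2 ≤ Lh)
    (hLh5 : Real.exp (-(Lh/2)) * (2:ℝ)^((n:ℝ)+α) ≤ ε₀)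
    {x : EuclideanSpace ℝ (Fin n)} (hx : x ∈ closure Ω)
    {ρ : ℝ} (hρ0 : 0 < ρ) (hρh : ρ ≤ 1/2) (hLρ : Lh ≤ Real.log (1/ρ))
    (Hm : volume (ball x ρ ∩ Ω) ≤
      ENNReal.ofReal (ε₀ * ρ ^ (n:ℝ) * (Real.log (1/ρ)) ^ (-α))) :
    volume (ball x (ρ/2) ∩ Ω) ≤
      ENNReal.ofReal (ε₀ * (ρ/2) ^ (n:ℝ) * (Real.log (1/(ρ/2))) ^ (-α)) := by
  have hn2 : (2:ℝ) ≤ (n:ℝ) := by exact_mod_cast hn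
  have hρ1 : ρ ≤ 1 := by linarith
  set L : ℝ := Real.log (1/ρ) with hLdef
  have hL1 : 1 ≤ L := le_trans hLh1 hLρ
  have hLpos : 0 < L := by linarith
  have hlogρ : Real.log ρ = -L := by
    rw [hLdef, one_div, Real.log_inv, neg_neg]
  set L' : ℝ := Real.log (1/(ρ/2)) with hL'def
  have hL'eq : L' = L + Real.log 2 := by
    rw [hL'def, hLdef]
    rw [show 1/(ρ/2) = 2 * (1/ρ) by field_simp]
    rw [Real.log_mul two_ne_zero (by positivity)]
    ring
  have hlog2pos : (0:ℝ) < Real.log 2 := Real.log_pos one_lt_two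
  have hlog2le : Real.log 2 ≤ 1 := by
    nlinarith [Real.log_le_sub_one_of_pos (show (0:ℝ) < 2 by norm_num)]
  have hL'pos : 0 < L' := by rw [hL'eq]; linarith
  have hL'le : L' ≤ 2*L := by rw [hL'eq]; linarith
  -- volumes
  have hfin : volume (ball x ρ ∩ Ω) ≠ ⊤ :=
    ne_of_lt (lt_of_le_of_lt (measure_mono inter_subset_left) measure_ball_lt_top)
  have hfin' : volume (ball x (ρ/2) ∩ Ω) ≠ ⊤ :=
    ne_of_lt (lt_of_le_of_lt (measure_mono inter_subset_left) measure_ball_lt_top)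
  set m : ℝ := (volume (ball x ρ ∩ Ω)).toReal with hmdef
  set m' : ℝ := (volume (ball x (ρ/2) ∩ Ω)).toReal with hm'def
  have hmm' : m' ≤ m := by
    apply ENNReal.toReal_mono hfin
    apply measure_mono
    exact inter_subset_inter (ball_subset_ball (by linarith)) (subset_refl _)
  have hmpos : 0 < m := by
    apply ENNReal.toReal_pos ?_ hfin
    apply ne_of_gt
    apply IsOpen.measure_pos volume (isOpen_ball.inter hΩo)
    obtain ⟨z, hzΩ, hdz⟩ := Metric.mem_closure_iff.1 hx ρ hρ0
    exact ⟨z, by rwa [mem_ball, dist_comm], hzΩ⟩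
  have hm'pos : 0 < m' := by
    apply ENNReal.toReal_pos ?_ hfin'
    apply ne_of_gt
    apply IsOpen.measure_pos volume (isOpen_ball.inter hΩo)
    obtain ⟨z, hzΩ, hdz⟩ := Metric.mem_closure_iff.1 hx (ρ/2) (by linarith)
    exact ⟨z, by rwa [mem_ball, dist_comm], hzΩ⟩
  have hm_ub : m ≤ ε₀ * ρ ^ (n:ℝ) * L ^ (-α) := by
    apply ENNReal.toReal_le_of_le_ofReal (by positivity) Hm
  have hρn1 : (0:ℝ) ≤ ρ ^ (n:ℝ) := by positivity
  have hρnle1 : ρ ^ (n:ℝ) ≤ 1 := Real.rpow_le_one hρ0.le hρ1 (by positivity)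
  have hLα1 : L ^ (-α) ≤ 1 := Real.rpow_le_one_of_one_le_of_nonpos hL1 (by linarith)
  have hLαpos : (0:ℝ) < L ^ (-α) := Real.rpow_pos_of_pos hLpos _
  have hm1 : m ≤ 1 := by
    calc m ≤ ε₀ * ρ ^ (n:ℝ) * L ^ (-α) := hm_ub
      _ ≤ 1 * 1 * 1 := by
          exact mul_le_mul (mul_le_mul hε₀1 hρnle1 hρn1 (by linarith)) hLα1 hLαpos.le
            (by norm_num)
      _ = 1 := by norm_num
  have hm'1 : m' ≤ 1 := le_trans hmm' hm1
  -- reduce goal to a real inequality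
  rw [← ENNReal.ofReal_toReal hfin', ← hm'def]
  apply ENNReal.ofReal_le_ofReal
  -- bridging: it suffices to beat ε₀ ρ^n L^{-α} 2^{-(n+α)}
  have hbridge : ε₀ * ρ ^ (n:ℝ) * L ^ (-α) * (2:ℝ)^(-((n:ℝ)+α)) ≤
      ε₀ * (ρ/2) ^ (n:ℝ) * L' ^ (-α) := by
    have e1 : (ρ/2) ^ (n:ℝ) = ρ ^ (n:ℝ) * (2:ℝ) ^ (-(n:ℝ)) := by
      rw [div_eq_mul_inv, Real.mul_rpow hρ0.le (by norm_num), Real.inv_rpow (by norm_num),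
        ← Real.rpow_neg (by norm_num)]
    have e2 : (2:ℝ)^(-((n:ℝ)+α)) = (2:ℝ)^(-(n:ℝ)) * (2:ℝ)^(-α) := by
      rw [← Real.rpow_add (by norm_num : (0:ℝ) < 2)]
      ring_nf
    have i3 : (2:ℝ)^(-α) * L^(-α) ≤ L'^(-α) := by
      rw [← Real.mul_rpow (by norm_num) hLpos.le]
      exact Real.rpow_le_rpow_of_nonpos hL'pos hL'le (by linarith)
    calc ε₀ * ρ ^ (n:ℝ) * L ^ (-α) * (2:ℝ)^(-((n:ℝ)+α))
        = (ε₀ * (ρ ^ (n:ℝ) * (2:ℝ)^(-(n:ℝ)))) * ((2:ℝ)^(-α) * L^(-α)) := by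
          rw [e2]; ring
      _ ≤ (ε₀ * (ρ ^ (n:ℝ) * (2:ℝ)^(-(n:ℝ)))) * L'^(-α) := by
          exact mul_le_mul_of_nonneg_left i3 (by positivity)
      _ = ε₀ * (ρ/2) ^ (n:ℝ) * L' ^ (-α) := by rw [e1]
  apply le_trans ?_ hbridge
  -- main goal : m' ≤ ε₀ * ρ^n * L^{-α} * 2^{-(n+α)}
  rcases le_or_gt m (ρ ^ ((n:ℝ)+1)) with hsmall | hbig
  · -- branch (i)
    have h1 : ρ ^ ((n:ℝ)+1) = ρ ^ (n:ℝ) * ρ := by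
      rw [Real.rpow_add hρ0, Real.rpow_one]
    have hρeq : ρ = Real.exp (-L) := by
      rw [← hlogρ, Real.exp_log hρ0]
    have h2 : Real.exp (-L) * L ^ α ≤ Real.exp (-(L/2)) :=
      exp_decay hα0 (le_trans hLh4 hLρ)
    have h3 : Real.exp (-(L/2)) ≤ Real.exp (-(Lh/2)) := by
      apply Real.exp_le_exp.2; linarith
    have h4 : ρ ≤ Real.exp (-(Lh/2)) * L ^ (-α) := by
      have h5 : L ^ α * L ^ (-α) = 1 := by
        rw [← Real.rpow_add hLpos]
        simp
      calc ρ = Real.exp (-L) * (L ^ α * L ^ (-α)) := by rw [h5, mul_one, hρeq]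
        _ = (Real.exp (-L) * L ^ α) * L ^ (-α) := by ring
        _ ≤ Real.exp (-(Lh/2)) * L ^ (-α) := by
            apply mul_le_mul_of_nonneg_right (le_trans h2 h3) hLαpos.le
    have h6 : Real.exp (-(Lh/2)) ≤ ε₀ * (2:ℝ)^(-((n:ℝ)+α)) := by
      have h7 : (2:ℝ)^((n:ℝ)+α) * (2:ℝ)^(-((n:ℝ)+α)) = 1 := by
        rw [← Real.rpow_add (by norm_num : (0:ℝ) < 2), add_neg_cancel, Real.rpow_zero]
      have h8 : (0:ℝ) < (2:ℝ)^(-((n:ℝ)+α)) := by positivity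
      calc Real.exp (-(Lh/2)) = Real.exp (-(Lh/2)) * ((2:ℝ)^((n:ℝ)+α) * (2:ℝ)^(-((n:ℝ)+α))) := by
            rw [h7, mul_one]
        _ = (Real.exp (-(Lh/2)) * (2:ℝ)^((n:ℝ)+α)) * (2:ℝ)^(-((n:ℝ)+α)) := by ring
        _ ≤ ε₀ * (2:ℝ)^(-((n:ℝ)+α)) := mul_le_mul_of_nonneg_right hLh5 h8.le
    calc m' ≤ m := hmm'
      _ ≤ ρ ^ (n:ℝ) * ρ := by rw [← h1]; exact hsmall
      _ ≤ ρ ^ (n:ℝ) * (Real.exp (-(Lh/2)) * L ^ (-α)) := mul_le_mul_of_nonneg_left h4 hρn1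
      _ ≤ ρ ^ (n:ℝ) * ((ε₀ * (2:ℝ)^(-((n:ℝ)+α))) * L ^ (-α)) := by
          apply mul_le_mul_of_nonneg_left ?_ hρn1
          apply mul_le_mul_of_nonneg_right h6 hLαpos.le
      _ = ε₀ * ρ ^ (n:ℝ) * L ^ (-α) * (2:ℝ)^(-((n:ℝ)+α)) := by ring

  · -- branch (ii): the main estimate
    have hDpos : (0:ℝ) < D := by linarith only [hD1]
    have hLhpos : (0:ℝ) < Lh := by linarith only [hLh1]
    have hc₁pos : (0:ℝ) < c₁ := by linarith only [hc₁]
    have hMpos : (0:ℝ) < M := by linarith only [hM1]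
    have hnpp : (0:ℝ) < (n:ℝ) - pp := by linarith only [hppn]
    have hnpos : (0:ℝ) < (n:ℝ) := by linarith only [hn2]
    have hn1' : (0:ℝ) < (n:ℝ) - 1 := by linarith only [hn2]
    have h2cM1 : (1:ℝ) ≤ 2*c₁*M := by
      have h1 : (1:ℝ)*1 ≤ c₁*M := mul_le_mul hc₁ hM1 zero_le_one (by linarith only [hc₁])
      linarith only [h1]
    -- local exponents
    set p₀ : ℝ := p x with hp₀def
    have hp01 : 1 ≤ p₀ := hp1 x hx
    have hp0p : p₀ ≤ pp := hpple x hx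
    have hp0n : p₀ < (n:ℝ) := lt_of_le_of_lt hp0p hppn
    have hp0pos : (0:ℝ) < p₀ := by linarith only [hp01]
    set ε : ℝ := Clog / L with hεdef
    have hε0 : 0 < ε := by positivity
    have hεL : ε * L = Clog := div_mul_cancel₀ _ (ne_of_gt hLpos)
    have hεεh : ε ≤ εh := by
      have h1 : ε ≤ Clog / Lh := div_le_div_left' hClog.le hLhpos hLρ
      have h2 : Clog / Lh ≤ εh := by
        rw [div_le_iff₀ hLhpos]
        linarith only [hLh2]
      linarith only [h1, h2]
    have hCL0 : 0 ≤ CL := by rw [hCL]; positivity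
    have hεCL : ε * (2*(CL+1)) ≤ 1/((n:ℝ)-1) :=
      le_trans (mul_le_mul_of_nonneg_right hεεh (by linarith only [hCL0])) hεh3
    set aa : ℝ := p₀ + ε with haadef
    have haa1 : 1 ≤ aa := by rw [haadef]; linarith only [hp01, hε0]
    have haapos : 0 < aa := by linarith only [haa1]
    have haane : aa ≠ 0 := ne_of_gt haapos
    have haan' : aa ≤ (n:ℝ) - ((n:ℝ)-pp)/2 := by
      have h1 : ε ≤ ((n:ℝ)-pp)/2 := le_trans hεεh hεh2
      rw [haadef]; linarith only [hp0p, h1]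
    have haan : aa ≤ (n:ℝ) := le_trans haan' (by linarith only [hnpp])
    set Ps : ℝ := pStar n p x with hPsdef
    have hPs_eq : Ps = (n:ℝ) * p₀ / ((n:ℝ) - p₀) := pStar_eq hp0pos hp0n
    have hfrac0 : (0:ℝ) < 1/((n:ℝ)-1) := by positivity
    have hPs_lb : p₀ + 1/((n:ℝ)-1) ≤ Ps := by
      rw [hPs_eq, le_div_iff₀ (by linarith only [hp0n] : (0:ℝ) < (n:ℝ) - p₀)]
      have h1 : 1/((n:ℝ)-1) * ((n:ℝ)-p₀) ≤ 1/((n:ℝ)-1) * ((n:ℝ)-1) :=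
        mul_le_mul_of_nonneg_left (by linarith only [hp01]) hfrac0.le
      have h2 : 1/((n:ℝ)-1) * ((n:ℝ)-1) = 1 := by field_simp
      have h3 : (0:ℝ) ≤ (p₀ - 1)*(p₀ + 1) :=
        mul_nonneg (by linarith only [hp01]) (by linarith only [hp01])
      nlinarith only [h1, h2, h3, hp01, hp0n]
    have hPs_ub : Ps ≤ Pb := by
      rw [hPs_eq]
      have h1 : (n:ℝ)*p₀/((n:ℝ)-p₀) ≤ (n:ℝ)*pp/((n:ℝ)-pp) := by
        rw [div_le_div_iff₀ (by linarith only [hp0n]) hnpp]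
        have h2 : (0:ℝ) ≤ (n:ℝ)*(n:ℝ)*(pp - p₀) :=
          mul_nonneg (by positivity) (by linarith only [hp0p])
        nlinarith only [h2]
      linarith only [h1, hPb]
    have hPs1 : 1 ≤ Ps := by linarith only [hPs_lb, hp01, hfrac0]
    have hPspos : 0 < Ps := by linarith only [hPs1]
    set b : ℝ := max 1 (Ps - CL*ε) with hbdef
    have hb1 : 1 ≤ b := le_max_left _ _
    have hbpos : 0 < b := by linarith only [hb1]
    have hCLε0 : 0 ≤ CL*ε := mul_nonneg hCL0 hε0.le
    have hbPs : b ≤ Ps := max_le hPs1 (by linarith only [hCLε0])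
    have hbB : Ps - CL*ε ≤ b := le_max_right _ _
    have hbaa : aa + 1/((n:ℝ)-1)/2 ≤ b := by
      have h1 : (CL+1)*ε ≤ (1/((n:ℝ)-1))/2 := by linarith only [hεCL]
      rw [haadef]
      linarith only [hbB, hPs_lb, h1]
    set β : ℝ := b / aa with hβdef
    have hβ1 : 1 + 1/(2*(n:ℝ)*((n:ℝ)-1)) ≤ β := by
      have h1 : (1/((n:ℝ)-1)/2)/(n:ℝ) ≤ (b - aa)/aa := by
        rw [div_le_div_iff₀ hnpos haapos]
        have i1 : (1/((n:ℝ)-1)/2)*aa ≤ (1/((n:ℝ)-1)/2)*(n:ℝ) :=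
          mul_le_mul_of_nonneg_left haan (by linarith only [hfrac0])
        have i2 : (1/((n:ℝ)-1)/2)*(n:ℝ) ≤ (b-aa)*(n:ℝ) :=
          mul_le_mul_of_nonneg_right (by linarith only [hbaa]) (by linarith only [hn2])
        linarith only [i1, i2]
      have h2 : β = 1 + (b-aa)/aa := by
        rw [hβdef]
        field_simp
        ring
      have h3 : (1/((n:ℝ)-1)/2)/(n:ℝ) = 1/(2*(n:ℝ)*((n:ℝ)-1)) := by
        field_simp
      rw [h2, ← h3]
      linarith only [h1]
    have hfracn : (0:ℝ) < 1/(2*(n:ℝ)*((n:ℝ)-1)) := by positivity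
    have hβ1' : 1 ≤ β := by linarith only [hβ1, hfracn]
    have hβpos : 0 < β := by linarith only [hβ1']
    -- oscillation bounds
    have hosc : ∀ y ∈ Ω ∩ closedBall x ρ, p y ≤ aa := by
      intro y hy
      have h1 : |p y - p x| ≤ ε := by
        rw [hεdef, hLdef]
        exact p_osc_local hClog hpLH hx (subset_closure hy.1) hρ0 hρh (mem_closedBall.1 hy.2)
      have h2 := (abs_le.1 h1).2
      rw [haadef, hp₀def]
      linarith only [h2]
    have hbp : ∀ y ∈ ball x (ρ/2) ∩ Ω, b ≤ pStar n p y := by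
      intro y hy
      have hyΩ : y ∈ Ω := hy.2
      have hyc : y ∈ closure Ω := subset_closure hyΩ
      have hpy1 : 1 ≤ p y := hp1 y hyc
      have hpyp : p y ≤ pp := hpple y hyc
      have hpyn : p y < (n:ℝ) := lt_of_le_of_lt hpyp hppn
      have hd : dist y x ≤ ρ := le_trans (le_of_lt (mem_ball.1 hy.1)) (by linarith only [hρ0])
      have h1 : |p y - p₀| ≤ ε := by
        rw [hεdef, hLdef, hp₀def]
        exact p_osc_local hClog hpLH hx hyc hρ0 hρh hd
      have hstar : pStar n p y = (n:ℝ) * p y / ((n:ℝ) - p y) :=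
        pStar_eq (by linarith only [hpy1]) hpyn
      rw [hbdef]
      apply max_le
      · rw [hstar, le_div_iff₀ (by linarith only [hpyn] : (0:ℝ) < (n:ℝ) - p y)]
        have h2 : (n:ℝ)*1 ≤ (n:ℝ)*p y := mul_le_mul_of_nonneg_left hpy1 (by positivity)
        linarith only [h2, hpy1, hn2]
      · have hnpy : (0:ℝ) < (n:ℝ) - p y := by linarith only [hpyn]
        have hnp₀ : (0:ℝ) < (n:ℝ) - p₀ := by linarith only [hp0n]
        have hden : (0:ℝ) < ((n:ℝ) - p y)*((n:ℝ) - p₀) := mul_pos hnpy hnp₀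
        have hdiff : (n:ℝ) * p y / ((n:ℝ) - p y) - Ps =
            (n:ℝ)^2*(p y - p₀)/(((n:ℝ) - p y)*((n:ℝ) - p₀)) := by
          rw [hPs_eq]
          rw [div_sub_div _ _ (ne_of_gt hnpy) (ne_of_gt hnp₀)]
          congr 1
          ring
        have hdenlb : ((n:ℝ)-pp)^2 ≤ ((n:ℝ) - p y)*((n:ℝ) - p₀) := by
          have h3 : ((n:ℝ)-pp)*((n:ℝ)-pp) ≤ ((n:ℝ) - p y)*((n:ℝ) - p₀) :=
            mul_le_mul (by linarith only [hpyp]) (by linarith only [hp0p])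
              (by linarith only [hnpp]) (by linarith only [hpyp, hnpp])
          rw [pow_two]
          exact h3
        have h2 : -((n:ℝ)^2*ε) ≤ (n:ℝ)^2*(p y - p₀) := by
          have h3 := (abs_le.1 h1).1
          have h4 : (n:ℝ)^2*(-ε) ≤ (n:ℝ)^2*(p y - p₀) :=
            mul_le_mul_of_nonneg_left h3 (sq_nonneg (n:ℝ))
          linarith only [h4]
        have hA1 : -((n:ℝ)^2*ε)/(((n:ℝ)-p y)*((n:ℝ)-p₀)) ≤
            (n:ℝ)^2*(p y - p₀)/(((n:ℝ)-p y)*((n:ℝ)-p₀)) := by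
          rw [div_le_div_iff₀ hden hden]
          have h5 := mul_le_mul_of_nonneg_right h2 hden.le
          linarith only [h5]
        have hA2 : (n:ℝ)^2*ε/(((n:ℝ)-p y)*((n:ℝ)-p₀)) ≤ (n:ℝ)^2*ε/(((n:ℝ)-pp)^2) :=
          div_le_div_left' (by positivity) (by positivity) hdenlb
        have h5 : CL * ε = (n:ℝ)^2*ε/(((n:ℝ)-pp)^2) := by
          rw [hCL]; ring
        have h6 : -((n:ℝ)^2*ε)/(((n:ℝ)-p y)*((n:ℝ)-p₀)) =
            -((n:ℝ)^2*ε/(((n:ℝ)-p y)*((n:ℝ)-p₀))) := by ring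
        rw [hstar]
        have h7 : -(CL*ε) ≤ (n:ℝ) * p y / ((n:ℝ) - p y) - Ps := by
          rw [hdiff, h5]
          rw [h6] at hA1
          linarith only [hA1, hA2]
        linarith only [h7, hbPs]
    -- main quantities
    set X : ℝ := D * m * L ^ rp with hXdef
    have hLrppos : (0:ℝ) < L ^ rp := Real.rpow_pos_of_pos hLpos _
    have hLrp1 : 1 ≤ L ^ rp := Real.one_le_rpow hL1 hrp0
    have hX_pos : 0 < X := by
      rw [hXdef]
      exact mul_pos (mul_pos hDpos hmpos) hLrppos
    have hLmerge : L^(-α) * L^rp = L^(rp - α) := by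
      rw [← Real.rpow_add hLpos]
      ring_nf
    have hX_le1 : X ≤ 1 := by
      have h3 : L^(rp-α) ≤ 1 :=
        Real.rpow_le_one_of_one_le_of_nonpos hL1 (by linarith only [hαrp])
      have h4 : m * L^rp ≤ ε₀ := by
        calc m * L^rp ≤ (ε₀ * ρ^(n:ℝ) * L^(-α)) * L^rp :=
              mul_le_mul_of_nonneg_right hm_ub hLrppos.le
          _ = ε₀ * ρ^(n:ℝ) * (L^(-α) * L^rp) := by ring
          _ = ε₀ * ρ^(n:ℝ) * L^(rp-α) := by rw [hLmerge]
          _ ≤ ε₀ * 1 * 1 := by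
              apply mul_le_mul (mul_le_mul (le_refl ε₀) hρnle1 hρn1 hε₀0.le) h3
                (Real.rpow_pos_of_pos hLpos _).le
                (by linarith only [hε₀0])
          _ = ε₀ := by ring
      calc X = D * (m * L^rp) := by rw [hXdef]; ring
        _ ≤ D * ε₀ := mul_le_mul_of_nonneg_left h4 hDpos.le
        _ ≤ 1 := hε₀D
    have hX_lb : ρ^((n:ℝ)+1) < X := by
      calc ρ^((n:ℝ)+1) < m := hbig
        _ = 1 * m * 1 := by ring
        _ ≤ D * m * L^rp := by
            apply mul_le_mul (mul_le_mul hD1 (le_refl m) hmpos.le hDpos.le) hLrp1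
              zero_le_one (mul_nonneg hDpos.le hmpos.le)
        _ = X := by rw [hXdef]
    set θ : ℝ := X ^ (1/aa) with hθdef
    have hθpos : 0 < θ := Real.rpow_pos_of_pos hX_pos _
    have hθle1 : θ ≤ 1 := Real.rpow_le_one hX_pos.le hX_le1 (by positivity)
    set T : ℝ := θ⁻¹ with hTdef
    have hTpos : 0 < T := inv_pos.2 hθpos
    have hT1 : 1 ≤ T := inv_ge_one hθpos hθle1
    have hinvρ1 : 1 ≤ ρ⁻¹ := inv_ge_one hρ0 hρ1
    have hTle : T ≤ (ρ⁻¹)^((n:ℝ)+1) := by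
      have h2 : (ρ^((n:ℝ)+1))^(1/aa) = ρ^(((n:ℝ)+1)*(1/aa)) :=
        (Real.rpow_mul hρ0.le _ _).symm
      have h1 : ρ^(((n:ℝ)+1)*(1/aa)) ≤ θ := by
        rw [← h2, hθdef]
        exact Real.rpow_le_rpow (Real.rpow_nonneg hρ0.le _) hX_lb.le (by positivity)
      have h4 : T ≤ (ρ^(((n:ℝ)+1)*(1/aa)))⁻¹ := by
        rw [hTdef]
        exact inv_anti (Real.rpow_pos_of_pos hρ0 _) h1
      have h5 : (ρ^(((n:ℝ)+1)*(1/aa)))⁻¹ = (ρ⁻¹)^(((n:ℝ)+1)*(1/aa)) :=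
        (Real.inv_rpow hρ0.le _).symm
      have h6 : (ρ⁻¹)^(((n:ℝ)+1)*(1/aa)) ≤ (ρ⁻¹)^((n:ℝ)+1) := by
        apply Real.rpow_le_rpow_of_exponent_le hinvρ1
        have h7 : 1/aa ≤ 1 := by
          rw [div_le_one haapos]; exact haa1
        have h8 : ((n:ℝ)+1)*(1/aa) ≤ ((n:ℝ)+1)*1 :=
          mul_le_mul_of_nonneg_left h7 (by positivity)
        linarith only [h8]
      rw [h5] at h4
      linarith only [h4, h6]
    have hTexp : T ≤ Real.exp (L*((n:ℝ)+1)) := by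
      have h1 : (ρ⁻¹)^((n:ℝ)+1) = Real.exp (L*((n:ℝ)+1)) := by
        rw [Real.rpow_def_of_pos (inv_pos.2 hρ0), Real.log_inv, hlogρ, neg_neg]
      rw [h1] at hTle
      exact hTle
    have hlogT : Real.log (Real.exp 1 + T) ≤ CG * L := by
      have h1 : (1:ℝ) ≤ Real.exp (L*((n:ℝ)+1)) :=
        Real.one_le_exp (mul_nonneg hLpos.le (by positivity))
      have h2 : Real.exp 1 + T ≤ (Real.exp 1 + 1) * Real.exp (L*((n:ℝ)+1)) := by
        have h9 : Real.exp 1 * 1 ≤ Real.exp 1 * Real.exp (L*((n:ℝ)+1)) :=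
          mul_le_mul_of_nonneg_left h1 (Real.exp_pos 1).le
        linarith only [hTexp, h9]
      calc Real.log (Real.exp 1 + T)
          ≤ Real.log ((Real.exp 1 + 1) * Real.exp (L*((n:ℝ)+1))) :=
            Real.log_le_log (by positivity) h2
        _ = Real.log (Real.exp 1 + 1) + L*((n:ℝ)+1) := by
            rw [Real.log_mul (by positivity) (ne_of_gt (Real.exp_pos _)), Real.log_exp]
        _ ≤ CG * L := by
            have h3 : (0:ℝ) ≤ Real.log (Real.exp 1 + 1) :=
              Real.log_nonneg (by linarith only [Real.exp_pos 1])
            have h4 : (Real.log (Real.exp 1 + 1) + (n:ℝ) + 1)*L ≤ CG*L :=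
              mul_le_mul_of_nonneg_right hCG hLpos.le
            have h5 : (0:ℝ) ≤ Real.log (Real.exp 1 + 1) * (L - 1) :=
              mul_nonneg h3 (by linarith only [hL1])
            nlinarith only [h4, h5, hL1, hnpos]
    have hTaa : T ^ aa = X⁻¹ := by
      rw [hTdef, Real.inv_rpow hθpos.le]
      congr 1
      rw [hθdef, ← Real.rpow_mul hX_pos.le, one_div, inv_mul_cancel₀ haane, Real.rpow_one]
    have hmcb : (volume (closedBall x ρ ∩ Ω)).toReal = m := by
      rw [hmdef, vol_cb_inter hn x ρ Ω]
    have hlf0 : (0:ℝ) ≤ Real.log (Real.exp 1 + T) := by linarith only [one_le_logE hTpos.le]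
    have hlf_le : (Real.log (Real.exp 1 + T))^rp ≤ CG^rp * L^rp := by
      calc (Real.log (Real.exp 1 + T))^rp ≤ (CG*L)^rp :=
            Real.rpow_le_rpow hlf0 hlogT hrp0
        _ = CG^rp * L^rp := Real.mul_rpow hCG0 hLpos.le
    have hmne : m ≠ 0 := ne_of_gt hmpos
    have hDne : D ≠ 0 := ne_of_gt hDpos
    have hLrpne : L ^ rp ≠ 0 := ne_of_gt hLrppos
    have hXinvm : X⁻¹ * m = 1/(D * L^rp) := by
      rw [hXdef]
      rw [mul_inv, mul_inv]
      field_simp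
    have hkey : (1 + A) * (T ^ aa * (Real.log (Real.exp 1 + T)) ^ rp) *
        (volume (closedBall x ρ ∩ Ω)).toReal ≤ 1 := by
      rw [hmcb, hTaa]
      have e1 : (1+A) * (X⁻¹ * (Real.log (Real.exp 1 + T))^rp) * m
          = (1+A) * (Real.log (Real.exp 1 + T))^rp * (X⁻¹ * m) := by ring
      rw [e1, hXinvm]
      have h2 : (1+A) * (Real.log (Real.exp 1 + T))^rp * (1/(D*L^rp)) ≤
          (1+A) * (CG^rp * L^rp) * (1/(D*L^rp)) :=
        mul_le_mul_of_nonneg_right (mul_le_mul_of_nonneg_left hlf_le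
          (by linarith only [hA0])) (le_of_lt (by positivity))
      have h3 : (1+A) * (CG^rp * L^rp) * (1/(D*L^rp)) = (1+A)*CG^rp/D := by
        field_simp
      rw [h3] at h2
      calc (1+A) * (Real.log (Real.exp 1 + T))^rp * (1/(D*L^rp)) ≤ (1+A)*CG^rp/D := h2
        _ ≤ 1 := by rw [div_le_one hDpos]; exact hD2
    -- test function
    obtain ⟨u, hucd, husupp, hun0, hule1, hu1, huz, hufd, hufdz⟩ :=
      exists_scaled_bump hM₀0 hχcd hχ1 hχ0 hχn0 hχle1 hχfd x hρ0
    set lam' : ℝ := (M/ρ) * θ with hlamdef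
    have hMρpos : (0:ℝ) < M/ρ := by positivity
    have hMρ1 : 1 ≤ M/ρ := by
      rw [le_div_iff₀ hρ0]
      linarith only [hρ1, hM1]
    have hlampos : 0 < lam' := mul_pos hMρpos hθpos
    have hTV1 : 1/lam' ≤ T := by
      rw [hTdef, hlamdef, one_div, mul_inv]
      calc (M/ρ)⁻¹ * θ⁻¹ ≤ 1 * θ⁻¹ := by
            apply mul_le_mul_of_nonneg_right ?_ (inv_pos.2 hθpos).le
            calc (M/ρ)⁻¹ ≤ 1⁻¹ := inv_anti one_pos hMρ1
              _ = 1 := inv_one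
        _ = θ⁻¹ := one_mul _
    have hTVM : (M/ρ)/lam' ≤ T := by
      rw [hlamdef, hTdef]
      rw [div_mul_eq_div_div, div_self (ne_of_gt hMρpos), one_div]
    have hΩm : MeasurableSet Ω := hΩo.measurableSet
    have hp1Ω : ∀ y ∈ Ω, 1 ≤ p y := fun y hy => hp1 y (subset_closure hy)
    -- modular bounds
    have hmod_u : (∫⁻ y in Ω, ENNReal.ofReal (Phi2 p r a y (|u y| / lam'))) ≤ 1 := by
      apply modular_le_one p r a hp1Ω ha0 hAle hrple hrp0 hA0 hΩm x hosc haa1 u hlampos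
        (fun y => by rw [abs_of_nonneg (hun0 y)]; exact hule1 y) huz hT1 hTV1 hkey
    have hgrad0 : ∀ y, y ∉ closedBall x ρ → ‖fderiv ℝ u y‖ = 0 := fun y hy => by
      rw [hufdz y hy]; simp
    have hgradV : ∀ y, |‖fderiv ℝ u y‖| ≤ M/ρ := by
      intro y
      rw [abs_norm]
      calc ‖fderiv ℝ u y‖ ≤ M₀/ρ := hufd y
        _ ≤ M/ρ := by
            rw [div_le_div_iff₀ hρ0 hρ0]
            exact mul_le_mul_of_nonneg_right hM₀M hρ0.le
    have hmod_g : (∫⁻ y in Ω, ENNReal.ofReal (Phi2 p r a y (|‖fderiv ℝ u y‖| / lam'))) ≤ 1 := by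
      apply modular_le_one p r a hp1Ω ha0 hAle hrple hrp0 hA0 hΩm x hosc haa1 _ hlampos
        hgradV hgrad0 hT1 hTVM hkey
    -- luxNorm bounds and combination
    have hN1 : luxNorm Ω (Phi2 p r a) u ≤ ENNReal.ofReal lam' := luxNorm_le hlampos hmod_u
    have hN2 : luxNorm Ω (Phi2 p r a) (fun y => ‖fderiv ℝ u y‖) ≤ ENNReal.ofReal lam' :=
      luxNorm_le hlampos hmod_g
    have hm'vol : volume (ball x (ρ/2) ∩ Ω) = ENNReal.ofReal m' :=
      (ENNReal.ofReal_toReal hfin').symm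
    have hlow : ENNReal.ofReal (m'^(1/b)) ≤ luxNorm Ω (Psi p r a) u := by
      apply le_luxNorm
      intro l hl hint
      exact psi_admissible_ge hΩo p r a x hρ0 hb1 ha0 hbp hu1 hm'vol hm'pos hm'1 hl hint
    have hcomb : ENNReal.ofReal (m'^(1/b)) ≤ ENNReal.ofReal (c₁ * (lam' + lam')) := by
      calc ENNReal.ofReal (m'^(1/b)) ≤ luxNorm Ω (Psi p r a) u := hlow
        _ ≤ ENNReal.ofReal c₁ * (luxNorm Ω (Phi2 p r a) u +
              luxNorm Ω (Phi2 p r a) (fun y => ‖fderiv ℝ u y‖)) := hemb u hucd husupp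
        _ ≤ ENNReal.ofReal c₁ * (ENNReal.ofReal lam' + ENNReal.ofReal lam') :=
            mul_le_mul_right (add_le_add hN1 hN2) _
        _ = ENNReal.ofReal (c₁ * (lam' + lam')) := by
            rw [← ENNReal.ofReal_add hlampos.le hlampos.le,
              ← ENNReal.ofReal_mul hc₁pos.le]
    have hreal : m'^(1/b) ≤ (2*c₁*M) * (ρ⁻¹ * θ) := by
      have h1 : m'^(1/b) ≤ c₁ * (lam' + lam') :=
        (ENNReal.ofReal_le_ofReal_iff
          (mul_nonneg hc₁pos.le (by linarith only [hlampos]))).1 hcomb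
      have h2 : c₁ * (lam' + lam') = (2*c₁*M) * (ρ⁻¹ * θ) := by
        rw [hlamdef]
        field_simp
        ring
      rw [h2] at h1
      exact h1
    -- raise to power b
    have hm'b : m' ≤ ((2*c₁*M) * (ρ⁻¹ * θ))^b := by
      have h1 : (m'^(1/b))^b ≤ ((2*c₁*M)*(ρ⁻¹*θ))^b :=
        Real.rpow_le_rpow (Real.rpow_nonneg hm'pos.le _) hreal hbpos.le
      rwa [← Real.rpow_mul hm'pos.le, one_div, inv_mul_cancel₀ (ne_of_gt hbpos),
        Real.rpow_one] at h1
    -- bounds on the four factors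
    have h2cMpos : (0:ℝ) < 2*c₁*M := by linarith only [h2cM1]
    have hK₁pos : 0 < K₁ := lt_of_lt_of_le (Real.rpow_pos_of_pos h2cMpos Pb) hK₁
    have hK₂pos : 0 < K₂ := lt_of_lt_of_le (Real.exp_pos _) hK₂
    have hb_ub : b ≤ Pb := le_trans hbPs hPs_ub
    have hG1 : (2*c₁*M)^b ≤ K₁ :=
      le_trans (Real.rpow_le_rpow_of_exponent_le h2cM1 hb_ub) hK₁
    have hDε₀pos : 0 < D*ε₀ := mul_pos hDpos hε₀0
    have hG3 : (D*ε₀)^β ≤ D*ε₀ := by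
      calc (D*ε₀)^β ≤ (D*ε₀)^(1:ℝ) :=
            Real.rpow_le_rpow_of_exponent_ge hDε₀pos hε₀D hβ1'
        _ = D*ε₀ := Real.rpow_one _
    -- exponent bound E
    have hEeq : -b + (n:ℝ)*β = b*(((n:ℝ)-aa)/aa) := by
      rw [hβdef]
      field_simp
      ring
    have hw : ((n:ℝ)-aa)/aa ≤ (n:ℝ) := by
      rw [div_le_iff₀ haapos]
      have h1 : (n:ℝ)*1 ≤ (n:ℝ)*aa := mul_le_mul_of_nonneg_left haa1 (by positivity)
      linarith only [h1, haapos]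
    have hw0 : 0 ≤ ((n:ℝ)-aa)/aa := div_nonneg (by linarith only [haan]) haapos.le
    have hstep2 : (Ps - CL*ε)*(((n:ℝ)-aa)/aa) ≤ b*(((n:ℝ)-aa)/aa) :=
      mul_le_mul_of_nonneg_right hbB hw0
    have hstep3 : Ps*(((n:ℝ)-aa)/aa) - CL*ε*(n:ℝ) ≤ (Ps - CL*ε)*(((n:ℝ)-aa)/aa) := by
      have h1 : (CL*ε)*(((n:ℝ)-aa)/aa) ≤ (CL*ε)*(n:ℝ) :=
        mul_le_mul_of_nonneg_left hw hCLε0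
      nlinarith only [h1]
    have hp₀ne : p₀ ≠ 0 := ne_of_gt hp0pos
    have hnp₀ne : (n:ℝ) - p₀ ≠ 0 := by
      intro h
      rw [sub_eq_zero] at h
      rw [← h] at hp0n
      exact lt_irrefl _ hp0n
    have hid : Ps*(((n:ℝ)-p₀)/p₀) = (n:ℝ) := by
      rw [hPs_eq]
      field_simp
    have hid2 : Ps*(((n:ℝ)-p₀)/p₀) - Ps*(((n:ℝ)-aa)/aa) = Ps*((n:ℝ)*ε)/(p₀*aa) := by
      rw [haadef]
      have hp₀ne : p₀ ≠ 0 := ne_of_gt hp0pos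
      have haane2 : p₀ + ε ≠ 0 := by
        intro h
        nlinarith only [h, hp0pos, hε0]
      field_simp
      ring
    have hid3 : Ps*((n:ℝ)*ε)/(p₀*aa) ≤ Pb*((n:ℝ)*ε) := by
      have hpa1 : (1:ℝ) ≤ p₀*aa := by
        have h1 : (1:ℝ)*1 ≤ p₀*aa := mul_le_mul hp01 haa1 zero_le_one hp0pos.le
        linarith only [h1]
      have hnum0 : (0:ℝ) ≤ Ps*((n:ℝ)*ε) :=
        mul_nonneg hPspos.le (mul_nonneg (by positivity) hε0.le)
      calc Ps*((n:ℝ)*ε)/(p₀*aa) ≤ Ps*((n:ℝ)*ε)/1 :=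
            div_le_div_left' hnum0 one_pos hpa1
        _ = Ps*((n:ℝ)*ε) := div_one _
        _ ≤ Pb*((n:ℝ)*ε) :=
            mul_le_mul_of_nonneg_right hPs_ub (mul_nonneg (by positivity) hε0.le)
    have hstep4 : (n:ℝ) - Pb*((n:ℝ)*ε) ≤ Ps*(((n:ℝ)-aa)/aa) := by
      linarith only [hid, hid2, hid3]
    have hE : (n:ℝ) - CF*ε ≤ -b + (n:ℝ)*β := by
      rw [hEeq]
      have h1 : 0 ≤ (CF - (n:ℝ)*(Pb + CL))*ε :=
        mul_nonneg (by linarith only [hCF]) hε0.le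
      nlinarith only [hstep2, hstep3, hstep4, h1]
    have hG2 : (ρ⁻¹)^b * (ρ^(n:ℝ))^β ≤ ρ^(n:ℝ) * K₂ := by
      have e1 : (ρ⁻¹)^b = ρ^(-b) := by
        rw [Real.inv_rpow hρ0.le, ← Real.rpow_neg hρ0.le]
      have e2 : (ρ^(n:ℝ))^β = ρ^((n:ℝ)*β) := (Real.rpow_mul hρ0.le _ _).symm
      have e3 : ρ^(-b) * ρ^((n:ℝ)*β) = ρ^(-b + (n:ℝ)*β) := (Real.rpow_add hρ0 _ _).symm
      have h4 : ρ^(-b + (n:ℝ)*β) ≤ ρ^((n:ℝ) - CF*ε) :=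
        Real.rpow_le_rpow_of_exponent_ge hρ0 hρ1 hE
      have e5 : ρ^((n:ℝ) - CF*ε) = ρ^(n:ℝ) * ρ^(-(CF*ε)) := by
        rw [show (n:ℝ) - CF*ε = (n:ℝ) + (-(CF*ε)) by ring, Real.rpow_add hρ0]
      have h6 : ρ^(-(CF*ε)) ≤ K₂ := by
        rw [Real.rpow_def_of_pos hρ0, hlogρ]
        rw [show -L * -(CF*ε) = CF*(ε*L) by ring, hεL]
        exact hK₂
      rw [e1, e2, e3]
      calc ρ^(-b + (n:ℝ)*β) ≤ ρ^((n:ℝ) - CF*ε) := h4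
        _ = ρ^(n:ℝ) * ρ^(-(CF*ε)) := e5
        _ ≤ ρ^(n:ℝ) * K₂ := mul_le_mul_of_nonneg_left h6 hρn1
    have hG4 : (L^(rp-α))^β ≤ L^(-α) * (Lh*Lh)⁻¹ := by
      have e1 : (L^(rp-α))^β = L^((rp-α)*β) := (Real.rpow_mul hLpos.le _ _).symm
      have h1 : α + 2 ≤ (α - rp)*β := by
        have h2 : (α-rp)*(1 + 1/(2*(n:ℝ)*((n:ℝ)-1))) ≤ (α-rp)*β :=
          mul_le_mul_of_nonneg_left hβ1 (by linarith only [hαrp])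
        linarith only [hα2, h2]
      have h3 : (rp-α)*β ≤ -α + (-2) := by nlinarith only [h1]
      have h4 : L^((rp-α)*β) ≤ L^(-α + (-2:ℝ)) :=
        Real.rpow_le_rpow_of_exponent_le hL1 h3
      have e5 : L^(-α + (-2:ℝ)) = L^(-α) * L^((-2):ℝ) := Real.rpow_add hLpos _ _
      have h6 : L^((-2):ℝ) ≤ (Lh*Lh)⁻¹ := by
        have e7 : L^((-2):ℝ) = (L*L)⁻¹ := by
          rw [show ((-2):ℝ) = -(2:ℝ) by norm_num, Real.rpow_neg hLpos.le]
          congr 1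
          rw [show (2:ℝ) = ((2:ℕ):ℝ) by norm_num, Real.rpow_natCast, pow_two]
        rw [e7]
        apply inv_anti (mul_pos hLhpos hLhpos)
        exact mul_le_mul hLρ hLρ hLhpos.le (by linarith only [hLρ, hLhpos])
      rw [e1]
      calc L^((rp-α)*β) ≤ L^(-α + (-2:ℝ)) := h4
        _ = L^(-α) * L^((-2):ℝ) := e5
        _ ≤ L^(-α) * (Lh*Lh)⁻¹ := mul_le_mul_of_nonneg_left h6 hLαpos.le
    -- θ^b bound
    have hXub : X ≤ (D*ε₀) * (ρ^(n:ℝ) * L^(rp-α)) := by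
      have h1 : m * L^rp ≤ (ε₀ * ρ^(n:ℝ) * L^(-α)) * L^rp :=
        mul_le_mul_of_nonneg_right hm_ub hLrppos.le
      have h2 : (ε₀ * ρ^(n:ℝ) * L^(-α)) * L^rp = ε₀ * (ρ^(n:ℝ) * L^(rp-α)) := by
        rw [show (ε₀ * ρ^(n:ℝ) * L^(-α)) * L^rp = ε₀ * ρ^(n:ℝ) * (L^(-α) * L^rp) by ring,
          hLmerge]
        ring
      calc X = D * (m * L^rp) := by rw [hXdef]; ring
        _ ≤ D * (ε₀ * (ρ^(n:ℝ) * L^(rp-α))) := by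
            apply mul_le_mul_of_nonneg_left ?_ hDpos.le
            rw [← h2]; exact h1
        _ = (D*ε₀) * (ρ^(n:ℝ) * L^(rp-α)) := by ring
    have hθb : θ^b ≤ (D*ε₀)^β * ((ρ^(n:ℝ))^β * (L^(rp-α))^β) := by
      have h1 : θ^b = X^β := by
        rw [hθdef, ← Real.rpow_mul hX_pos.le]
        congr 1
        rw [hβdef]
        ring
      have h2 : X^β ≤ ((D*ε₀) * (ρ^(n:ℝ) * L^(rp-α)))^β :=
        Real.rpow_le_rpow hX_pos.le hXub hβpos.le
      have h3 : ((D*ε₀) * (ρ^(n:ℝ) * L^(rp-α)))^β =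
          (D*ε₀)^β * ((ρ^(n:ℝ))^β * (L^(rp-α))^β) := by
        rw [Real.mul_rpow hDε₀pos.le
          (mul_nonneg (Real.rpow_nonneg hρ0.le _) (Real.rpow_nonneg hLpos.le _)),
          Real.mul_rpow (Real.rpow_nonneg hρ0.le _) (Real.rpow_nonneg hLpos.le _)]
      rw [h1, ← h3]
      exact h2
    -- final assembly
    have hG2' : (0:ℝ) ≤ (ρ⁻¹)^b := Real.rpow_nonneg (inv_nonneg.2 hρ0.le) _
    have hmain : m' ≤ K₁ * (ρ^(n:ℝ) * K₂) * ((D*ε₀) * (L^(-α) * (Lh*Lh)⁻¹)) := by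
      calc m' ≤ ((2*c₁*M) * (ρ⁻¹ * θ))^b := hm'b
        _ = (2*c₁*M)^b * ((ρ⁻¹)^b * θ^b) := by
            rw [Real.mul_rpow h2cMpos.le (mul_nonneg (inv_nonneg.2 hρ0.le) hθpos.le),
              Real.mul_rpow (inv_nonneg.2 hρ0.le) hθpos.le]
        _ ≤ K₁ * ((ρ⁻¹)^b * ((D*ε₀)^β * ((ρ^(n:ℝ))^β * (L^(rp-α))^β))) := by
            apply mul_le_mul hG1 (mul_le_mul_of_nonneg_left hθb hG2')
              (mul_nonneg hG2' (Real.rpow_nonneg hθpos.le _)) hK₁pos.le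
        _ = ((ρ⁻¹)^b * (ρ^(n:ℝ))^β) * ((D*ε₀)^β * (L^(rp-α))^β) * K₁ := by ring
        _ ≤ (ρ^(n:ℝ) * K₂) * ((D*ε₀) * (L^(-α) * (Lh*Lh)⁻¹)) * K₁ := by
            apply mul_le_mul_of_nonneg_right ?_ hK₁pos.le
            apply mul_le_mul hG2 ?_
              (mul_nonneg (Real.rpow_nonneg hDε₀pos.le _)
                (Real.rpow_nonneg (Real.rpow_nonneg hLpos.le _) _))
              (mul_nonneg (Real.rpow_nonneg hρ0.le _) hK₂pos.le)
            apply mul_le_mul hG3 hG4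
              (Real.rpow_nonneg (Real.rpow_nonneg hLpos.le _) _) hDε₀pos.le
        _ = K₁ * (ρ^(n:ℝ) * K₂) * ((D*ε₀) * (L^(-α) * (Lh*Lh)⁻¹)) := by ring
    have hLh2pos : (0:ℝ) < Lh*Lh := mul_pos hLhpos hLhpos
    have hfin2 : K₁*K₂*D ≤ Lh*Lh * (2:ℝ)^(-((n:ℝ)+α)) := by
      have h7 : (2:ℝ)^((n:ℝ)+α) * (2:ℝ)^(-((n:ℝ)+α)) = 1 := by
        rw [← Real.rpow_add (by norm_num : (0:ℝ) < 2), add_neg_cancel, Real.rpow_zero]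
      have h8 : (0:ℝ) < (2:ℝ)^(-((n:ℝ)+α)) := by positivity
      calc K₁*K₂*D = ((2:ℝ)^((n:ℝ)+α) * (K₁*K₂*D)) * (2:ℝ)^(-((n:ℝ)+α)) := by
            rw [show ((2:ℝ)^((n:ℝ)+α) * (K₁*K₂*D)) * (2:ℝ)^(-((n:ℝ)+α))
              = (K₁*K₂*D) * ((2:ℝ)^((n:ℝ)+α) * (2:ℝ)^(-((n:ℝ)+α))) by ring, h7, mul_one]
        _ ≤ (Lh*Lh) * (2:ℝ)^(-((n:ℝ)+α)) := mul_le_mul_of_nonneg_right hLh3 h8.le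
    have e5 : K₁*(ρ^(n:ℝ)*K₂)*((D*ε₀)*(L^(-α)*(Lh*Lh)⁻¹)) =
        (K₁*K₂*D)*((Lh*Lh)⁻¹*(ε₀*ρ^(n:ℝ)*L^(-α))) := by ring
    have hZ0 : (0:ℝ) ≤ (Lh*Lh)⁻¹*(ε₀*ρ^(n:ℝ)*L^(-α)) :=
      mul_nonneg (inv_nonneg.2 hLh2pos.le)
        (mul_nonneg (mul_nonneg hε₀0.le hρn1) hLαpos.le)
    calc m' ≤ K₁ * (ρ^(n:ℝ) * K₂) * ((D*ε₀) * (L^(-α) * (Lh*Lh)⁻¹)) := hmain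
      _ = (K₁*K₂*D)*((Lh*Lh)⁻¹*(ε₀*ρ^(n:ℝ)*L^(-α))) := e5
      _ ≤ (Lh*Lh * (2:ℝ)^(-((n:ℝ)+α)))*((Lh*Lh)⁻¹*(ε₀*ρ^(n:ℝ)*L^(-α))) :=
          mul_le_mul_of_nonneg_right hfin2 hZ0
      _ = ε₀ * ρ^(n:ℝ) * L^(-α) * (2:ℝ)^(-((n:ℝ)+α)) := by
          rw [show (Lh*Lh * (2:ℝ)^(-((n:ℝ)+α)))*((Lh*Lh)⁻¹*(ε₀*ρ^(n:ℝ)*L^(-α)))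
            = (Lh*Lh*(Lh*Lh)⁻¹)*((2:ℝ)^(-((n:ℝ)+α))*(ε₀*ρ^(n:ℝ)*L^(-α))) by ring,
            mul_inv_cancel₀ (ne_of_gt hLh2pos), one_mul]
          ring

lemma bridge {n : ℕ} {ε₀ α ρ : ℝ} (hε₀ : 0 ≤ ε₀) (hα0 : 0 < α) (hρ0 : 0 < ρ)
    (hρh : ρ ≤ 1/2) :
    ε₀ * ρ ^ (n:ℝ) * (Real.log (1/ρ)) ^ (-α) * (2:ℝ)^(-((n:ℝ)+α)) ≤
      ε₀ * (ρ/2) ^ (n:ℝ) * (Real.log (1/(ρ/2))) ^ (-α) := by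
  set L : ℝ := Real.log (1/ρ) with hLdef
  have hlog2pos : (0:ℝ) < Real.log 2 := Real.log_pos one_lt_two
  have hL2 : Real.log 2 ≤ L := by
    rw [hLdef]
    apply Real.log_le_log two_pos
    rw [le_div_iff₀ hρ0]
    linarith
  have hLpos : 0 < L := lt_of_lt_of_le hlog2pos hL2
  set L' : ℝ := Real.log (1/(ρ/2)) with hL'def
  have hL'eq : L' = L + Real.log 2 := by
    rw [hL'def, hLdef, show 1/(ρ/2) = 2 * (1/ρ) by field_simp,
      Real.log_mul two_ne_zero (by positivity)]
    ring
  have hL'pos : 0 < L' := by rw [hL'eq]; linarith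
  have hL'le : L' ≤ 2*L := by rw [hL'eq]; linarith
  have e1 : (ρ/2) ^ (n:ℝ) = ρ ^ (n:ℝ) * (2:ℝ) ^ (-(n:ℝ)) := by
    rw [div_eq_mul_inv, Real.mul_rpow hρ0.le (by norm_num), Real.inv_rpow (by norm_num),
      ← Real.rpow_neg (by norm_num)]
  have e2 : (2:ℝ)^(-((n:ℝ)+α)) = (2:ℝ)^(-(n:ℝ)) * (2:ℝ)^(-α) := by
    rw [← Real.rpow_add (by norm_num : (0:ℝ) < 2)]
    ring_nf
  have i3 : (2:ℝ)^(-α) * L^(-α) ≤ L'^(-α) := by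
    rw [← Real.mul_rpow (by norm_num) hLpos.le]
    exact Real.rpow_le_rpow_of_nonpos hL'pos hL'le (by linarith)
  calc ε₀ * ρ ^ (n:ℝ) * L ^ (-α) * (2:ℝ)^(-((n:ℝ)+α))
      = (ε₀ * (ρ ^ (n:ℝ) * (2:ℝ)^(-(n:ℝ)))) * ((2:ℝ)^(-α) * L^(-α)) := by
        rw [e2]; ring
    _ ≤ (ε₀ * (ρ ^ (n:ℝ) * (2:ℝ)^(-(n:ℝ)))) * L'^(-α) := by
        apply mul_le_mul_of_nonneg_left i3
        apply mul_nonneg hε₀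
        apply mul_nonneg (Real.rpow_nonneg hρ0.le _) (Real.rpow_nonneg (by norm_num) _)
    _ = ε₀ * (ρ/2) ^ (n:ℝ) * L' ^ (-α) := by rw [e1]


end Stmt18Aux

open Stmt18Aux Metric

set_option maxHeartbeats 2000000 in
/-- under the embedding hypothesis, if `r(x) ≥ 0` for at least one
`x ∈ Ω`, then `Ω` satisfies the log-measure density condition: there are `c, α > 0`
with `|B_R(x) ∩ Ω| ≥ c Rⁿ (log(1/R))^{−α}` for all `x ∈ closure Ω`, `R ∈ (0,1/2]`. -/
theorem stmt_18 {n : ℕ} (hn : 2 ≤ n)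
    (Ω : Set (EuclideanSpace ℝ (Fin n))) (hΩo : IsOpen Ω)
    (p r a : EuclideanSpace ℝ (Fin n) → ℝ)
    (hp1 : ∀ x ∈ closure Ω, 1 ≤ p x)
    (Clog : ℝ) (hClog : 0 < Clog)
    (hpLH : ∀ x ∈ closure Ω, ∀ y ∈ closure Ω, x ≠ y →
      |p x - p y| ≤ Clog / Real.log (Real.exp 1 + 1 / dist x y))
    (hpn : sSup (p '' Ω) < n)
    (hrB : BddAbove (r '' Ω)) (hrb : BddBelow (r '' Ω))
    (ha0 : ∀ x ∈ Ω, 0 ≤ a x) (haB : BddAbove (a '' Ω))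
    (c₁ : ℝ) (hc₁ : 0 < c₁)
    (hemb : ∀ u : EuclideanSpace ℝ (Fin n) → ℝ,
      ContDiff ℝ 1 u → HasCompactSupport u →
      luxNorm Ω (Psi p r a) u ≤
        ENNReal.ofReal c₁ * (luxNorm Ω (Phi2 p r a) u +
          luxNorm Ω (Phi2 p r a) (fun x => ‖fderiv ℝ u x‖)))
    (hr : ∃ x ∈ Ω, 0 ≤ r x) :
    ∃ c : ℝ, 0 < c ∧ ∃ α : ℝ, 0 < α ∧
      ∀ x ∈ closure Ω, ∀ R : ℝ, R ∈ Set.Ioc (0:ℝ) (1/2) →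
        ENNReal.ofReal (c * R ^ (n : ℝ) * (Real.log (1 / R)) ^ (-α)) ≤
          volume (Metric.ball x R ∩ Ω) := by
  obtain ⟨x₀, hx₀Ω, hrx₀⟩ := hr
  have hn2' : (2:ℝ) ≤ (n:ℝ) := by exact_mod_cast hn
  -- p bounds
  have hpBdd : BddAbove (p '' Ω) := by
    refine ⟨p x₀ + Clog, ?_⟩
    rintro _ ⟨z, hz, rfl⟩
    have h1 := p_osc_global hClog hpLH (subset_closure hz) (subset_closure hx₀Ω)
    have h2 := (abs_le.1 h1).2
    linarith
  set pp : ℝ := sSup (p '' Ω) with hppdef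
  have hpp1 : 1 ≤ pp :=
    le_trans (hp1 x₀ (subset_closure hx₀Ω)) (le_csSup hpBdd (mem_image_of_mem p hx₀Ω))
  have hppn : pp < (n:ℝ) := hpn
  have hpple : ∀ y ∈ closure Ω, p y ≤ pp := fun y hy => p_le_sSup hClog hpLH hpBdd hy
  have hnpp : (0:ℝ) < (n:ℝ) - pp := by linarith
  -- r, a bounds
  set rp : ℝ := sSup (r '' Ω) with hrpdef
  have hrp0 : 0 ≤ rp := le_trans hrx₀ (le_csSup hrB (mem_image_of_mem r hx₀Ω))
  have hrple : ∀ y ∈ Ω, r y ≤ rp := fun y hy => le_csSup hrB (mem_image_of_mem r hy)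
  set A : ℝ := sSup (a '' Ω) with hAdef
  have hA0 : 0 ≤ A := le_trans (ha0 x₀ hx₀Ω) (le_csSup haB (mem_image_of_mem a hx₀Ω))
  have hAle : ∀ y ∈ Ω, a y ≤ A := fun y hy => le_csSup haB (mem_image_of_mem a hy)
  -- strengthen c₁
  set c₁' : ℝ := max c₁ 1 with hc₁'def
  have hc₁'1 : 1 ≤ c₁' := le_max_right _ _
  have hemb' : ∀ u : EuclideanSpace ℝ (Fin n) → ℝ, ContDiff ℝ 1 u → HasCompactSupport u →
      luxNorm Ω (Psi p r a) u ≤ ENNReal.ofReal c₁' * (luxNorm Ω (Phi2 p r a) u +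
        luxNorm Ω (Phi2 p r a) (fun x => ‖fderiv ℝ u x‖)) := by
    intro u h1 h2
    refine le_trans (hemb u h1 h2) ?_
    exact mul_le_mul_left (ENNReal.ofReal_le_ofReal (le_max_left _ _)) _
  -- bump
  obtain ⟨χ, M₀, hM₀0, hχcd, hχsupp, hχn0, hχle1, hχ1, hχ0, hχfd⟩ := exists_bump n
  set M : ℝ := M₀ + 1 with hMdef
  have hM1 : 1 ≤ M := by rw [hMdef]; linarith
  have hM₀M : M₀ ≤ M := by rw [hMdef]; linarith
  -- constants
  set CL : ℝ := (n:ℝ)^2/((n:ℝ)-pp)^2 with hCLdef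
  have hCL0 : 0 ≤ CL := by positivity
  set Pb : ℝ := (n:ℝ)*pp/((n:ℝ)-pp) with hPbdef
  have hPble : (n:ℝ)*pp/((n:ℝ)-pp) ≤ Pb := le_refl _
  have hPb0 : 0 ≤ Pb := by
    rw [hPbdef]
    apply div_nonneg (by positivity) hnpp.le
  set α : ℝ := 4*(n:ℝ)*((n:ℝ)-1)*(rp+1) with hαdef
  have hα0 : 0 < α := by
    rw [hαdef]
    have : (0:ℝ) < (n:ℝ)-1 := by linarith
    positivity
  have hNN : (2:ℝ) ≤ (n:ℝ)*((n:ℝ)-1) := by nlinarith only [hn2']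
  have hNN1 : (2:ℝ)*(rp+1) ≤ ((n:ℝ)*((n:ℝ)-1))*(rp+1) :=
    mul_le_mul_of_nonneg_right hNN (by linarith only [hrp0])
  have hα1 : 1 ≤ α := by
    rw [hαdef]
    nlinarith only [hNN1, hrp0]
  have hαrp : rp ≤ α := by
    rw [hαdef]
    nlinarith only [hNN1, hrp0]
  have hα2 : α + 2 ≤ (α - rp) * (1 + 1/(2*(n:ℝ)*((n:ℝ)-1))) := by
    have hN2pos : (0:ℝ) < 2*(n:ℝ)*((n:ℝ)-1) := by nlinarith only [hn2']
    rw [show (1:ℝ) + 1/(2*(n:ℝ)*((n:ℝ)-1)) =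
      (2*(n:ℝ)*((n:ℝ)-1) + 1)/(2*(n:ℝ)*((n:ℝ)-1)) by rw [add_div, div_self hN2pos.ne']]
    rw [← mul_div_assoc, le_div_iff₀ hN2pos, hαdef]
    nlinarith only [mul_nonneg hrp0
      (by nlinarith only [hn2'] : (0:ℝ) ≤ 2*(n:ℝ)*((n:ℝ)-1) - 1), hn2', hrp0]
  set εh : ℝ := min (1/(2*((n:ℝ)-1)*(CL+1))) (((n:ℝ)-pp)/2) with hεhdef
  have hCL1pos : (0:ℝ) < CL + 1 := by linarith
  have hεh1 : 0 < εh := by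
    apply lt_min
    · apply div_pos one_pos
      apply mul_pos (by nlinarith only [hn2']) hCL1pos
    · linarith
  have hεh2 : εh ≤ ((n:ℝ)-pp)/2 := min_le_right _ _
  have hεh3 : εh * (2*(CL+1)) ≤ 1/((n:ℝ)-1) := by
    have h1 : εh ≤ 1/(2*((n:ℝ)-1)*(CL+1)) := min_le_left _ _
    have h2 : εh * (2*(CL+1)) ≤ (1/(2*((n:ℝ)-1)*(CL+1))) * (2*(CL+1)) :=
      mul_le_mul_of_nonneg_right h1 (by linarith)
    have h3 : (1/(2*((n:ℝ)-1)*(CL+1))) * (2*(CL+1)) = 1/((n:ℝ)-1) := by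
      have hne1 : ((n:ℝ)-1) ≠ 0 := by intro h; nlinarith only [h, hn2']
      have hne2 : (CL+1) ≠ 0 := ne_of_gt hCL1pos
      field_simp
    linarith
  set CG : ℝ := Real.log (Real.exp 1 + 1) + (n:ℝ) + 1 with hCGdef
  have hlogE1 : (0:ℝ) ≤ Real.log (Real.exp 1 + 1) :=
    Real.log_nonneg (by linarith [Real.exp_pos 1])
  have hCGle : Real.log (Real.exp 1 + 1) + (n:ℝ) + 1 ≤ CG := le_refl _
  have hCG0 : 0 ≤ CG := by rw [hCGdef]; positivity
  set D : ℝ := max 1 ((1+A)*CG^rp) with hDdef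
  have hD1 : 1 ≤ D := le_max_left _ _
  have hD2 : (1+A)*CG^rp ≤ D := le_max_right _ _
  have hDpos : (0:ℝ) < D := by linarith
  set ε₀ : ℝ := 1/(1+D) with hε₀def
  have hε₀0 : 0 < ε₀ := by rw [hε₀def]; positivity
  have hε₀1 : ε₀ ≤ 1 := by
    rw [hε₀def]
    rw [div_le_one (by linarith)]
    linarith
  have hε₀D : D * ε₀ ≤ 1 := by
    rw [hε₀def]
    rw [mul_one_div, div_le_one (by linarith)]
    linarith
  set CF : ℝ := (n:ℝ)*(Pb + CL) with hCFdef
  have hCFle : (n:ℝ)*(Pb + CL) ≤ CF := le_refl _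
  have hCF0 : 0 ≤ CF := by
    rw [hCFdef]
    apply mul_nonneg (by positivity) (by linarith)
  set K₁ : ℝ := (2*c₁'*M)^Pb with hK₁def
  have hK₁le : (2*c₁'*M)^Pb ≤ K₁ := le_refl _
  set K₂ : ℝ := Real.exp (CF*Clog) with hK₂def
  have hK₂le : Real.exp (CF*Clog) ≤ K₂ := le_refl _
  have h2cMpos : (0:ℝ) < 2*c₁'*M := by nlinarith only [hc₁'1, hM1]
  have hK₁pos : (0:ℝ) < K₁ := by rw [hK₁def]; exact Real.rpow_pos_of_pos h2cMpos _
  have hK₂pos : (0:ℝ) < K₂ := Real.exp_pos _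
  -- the threshold scale
  have h2nαpos : (0:ℝ) < (2:ℝ)^((n:ℝ)+α) := by positivity
  have hQ1 : (1:ℝ) ≤ (2:ℝ)^((n:ℝ)+α)/ε₀ := by
    have h1 : (1:ℝ) ≤ (2:ℝ)^((n:ℝ)+α) :=
      Real.one_le_rpow one_le_two (by positivity)
    rw [le_div_iff₀ hε₀0]
    nlinarith only [h1, hε₀1, hε₀0]
  set Lh : ℝ := 1 + 16*α^2 + Clog/εh + (2:ℝ)^((n:ℝ)+α)*(K₁*K₂*D) +
    2*Real.log ((2:ℝ)^((n:ℝ)+α)/ε₀) with hLhdef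
  have hlogQ0 : (0:ℝ) ≤ Real.log ((2:ℝ)^((n:ℝ)+α)/ε₀) := Real.log_nonneg hQ1
  have hterm30 : (0:ℝ) ≤ Clog/εh := by positivity
  have hterm40 : (0:ℝ) ≤ (2:ℝ)^((n:ℝ)+α)*(K₁*K₂*D) := by positivity
  have hLh1 : 1 ≤ Lh := by
    rw [hLhdef]
    nlinarith only [hlogQ0, hterm30, hterm40, sq_nonneg α]
  have hLhpos : (0:ℝ) < Lh := by linarith
  have hLh2 : Clog ≤ Lh * εh := by
    have h1 : Clog/εh ≤ Lh := by
      rw [hLhdef]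
      nlinarith only [hlogQ0, hterm40, sq_nonneg α]
    calc Clog = (Clog/εh) * εh := by field_simp
      _ ≤ Lh * εh := mul_le_mul_of_nonneg_right h1 hεh1.le
  have hLh3 : (2:ℝ)^((n:ℝ)+α) * (K₁*K₂*D) ≤ Lh * Lh := by
    have h1 : (2:ℝ)^((n:ℝ)+α) * (K₁*K₂*D) ≤ Lh := by
      rw [hLhdef]
      nlinarith only [hlogQ0, hterm30, sq_nonneg α]
    calc (2:ℝ)^((n:ℝ)+α) * (K₁*K₂*D) ≤ Lh := h1
      _ = Lh * 1 := (mul_one _).symm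
      _ ≤ Lh * Lh := mul_le_mul_of_nonneg_left hLh1 hLhpos.le
  have hLh4 : 16*α^2 ≤ Lh := by
    rw [hLhdef]
    nlinarith only [hlogQ0, hterm30, hterm40]
  have hLh5 : Real.exp (-(Lh/2)) * (2:ℝ)^((n:ℝ)+α) ≤ ε₀ := by
    have hQpos : (0:ℝ) < (2:ℝ)^((n:ℝ)+α)/ε₀ := by positivity
    have h1 : Real.log ((2:ℝ)^((n:ℝ)+α)/ε₀) ≤ Lh/2 := by
      rw [hLhdef]
      nlinarith only [hlogQ0, hterm30, hterm40, sq_nonneg α]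
    have h2 : Real.exp (-(Lh/2)) ≤ Real.exp (-(Real.log ((2:ℝ)^((n:ℝ)+α)/ε₀))) := by
      apply Real.exp_le_exp.2
      linarith
    have h3 : Real.exp (-(Real.log ((2:ℝ)^((n:ℝ)+α)/ε₀))) = ε₀/(2:ℝ)^((n:ℝ)+α) := by
      rw [Real.exp_neg, Real.exp_log hQpos, inv_div]
    calc Real.exp (-(Lh/2)) * (2:ℝ)^((n:ℝ)+α)
        ≤ (ε₀/(2:ℝ)^((n:ℝ)+α)) * (2:ℝ)^((n:ℝ)+α) := by
          apply mul_le_mul_of_nonneg_right ?_ h2nαpos.le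
          rw [← h3]; exact h2
      _ = ε₀ := by field_simp
  -- the inductive step
  have step : ∀ x ∈ closure Ω, ∀ ρ : ℝ, 0 < ρ → ρ ≤ 1/2 → Lh ≤ Real.log (1/ρ) →
      volume (ball x ρ ∩ Ω) ≤ ENNReal.ofReal (ε₀ * ρ^(n:ℝ) * (Real.log (1/ρ))^(-α)) →
      volume (ball x (ρ/2) ∩ Ω) ≤
        ENNReal.ofReal (ε₀ * (ρ/2)^(n:ℝ) * (Real.log (1/(ρ/2)))^(-α)) := by
    intro x hx ρ h1 h2 h3 h4
    exact step_lemma hn hΩo hp1 hClog hpLH hpp1 hppn hpple hrp0 hrple hA0 hAle ha0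
      hc₁'1 hemb' hM₀0 hχcd hχ1 hχ0 hχn0 hχle1 hχfd hM1 hM₀M hCLdef hPble hPb0
      hα0 hαrp hα2 hεh1 hεh2 hεh3 hCGle hCG0 hD1 hD2 hε₀0 hε₀1 hε₀D hCFle hCF0
      hK₁le hK₂le hLh1 hLh2 hLh3 hLh4 hLh5 hx h1 h2 h3 h4
  -- the threshold radius
  set ρs : ℝ := min (1/2) (Real.exp (-Lh)) with hρsdef
  have hρs0 : 0 < ρs := lt_min (by norm_num) (Real.exp_pos _)
  have hρsh : ρs ≤ 1/2 := min_le_left _ _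
  have hρsL : ∀ ρ : ℝ, 0 < ρ → ρ ≤ ρs → Lh ≤ Real.log (1/ρ) := by
    intro ρ h0 h1
    have h2 : ρ ≤ Real.exp (-Lh) := le_trans h1 (min_le_right _ _)
    have h3 : Real.log ρ ≤ -Lh := by
      calc Real.log ρ ≤ Real.log (Real.exp (-Lh)) := Real.log_le_log h0 h2
        _ = -Lh := Real.log_exp _
    rw [one_div, Real.log_inv]
    linarith
  -- interior density (Prop A)
  haveI hnt : Nontrivial (EuclideanSpace ℝ (Fin n)) :=
    euclidean_nontrivial (le_trans one_le_two hn)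
  have propA : ∀ x ∈ Ω, ∀ ρ : ℝ, 0 < ρ → ρ ≤ ρs →
      ENNReal.ofReal (ε₀ * ρ^(n:ℝ) * (Real.log (1/ρ))^(-α)) ≤ volume (ball x ρ ∩ Ω) := by
    intro x hxΩ ρ hρ0 hρρs
    by_contra hcon
    push_neg at hcon
    have hind : ∀ k : ℕ, volume (ball x (ρ/2^k) ∩ Ω) ≤
        ENNReal.ofReal (ε₀ * (ρ/2^k)^(n:ℝ) * (Real.log (1/(ρ/2^k)))^(-α)) := by
      intro k
      induction k with
      | zero => simpa using hcon.le
      | succ k ih =>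
        have e : ρ/2^(k+1) = (ρ/2^k)/2 := by rw [pow_succ]; ring
        have h0 : 0 < ρ/2^k := by positivity
        have h1 : ρ/2^k ≤ ρs := by
          apply le_trans ?_ hρρs
          apply div_le_self hρ0.le
          exact one_le_pow₀ one_le_two
        rw [e]
        exact step x (subset_closure hxΩ) (ρ/2^k) h0 (le_trans h1 hρsh) (hρsL _ h0 h1) ih
    -- contradiction at small scales
    obtain ⟨δ, hδ0, hδ⟩ := Metric.isOpen_iff.1 hΩo x hxΩ
    set V₁ : ℝ≥0∞ := volume (ball (0 : EuclideanSpace ℝ (Fin n)) 1) with hV₁def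
    have hV₁pos : 0 < V₁ := Metric.measure_ball_pos volume 0 one_pos
    have hV₁fin : V₁ ≠ ⊤ := ne_of_lt measure_ball_lt_top
    set v₁ : ℝ := V₁.toReal with hv₁def
    have hv₁pos : 0 < v₁ := ENNReal.toReal_pos (ne_of_gt hV₁pos) hV₁fin
    set W : ℝ := 1 + ε₀/v₁ with hWdef
    have hW1 : 1 ≤ W := by
      rw [hWdef]
      have : 0 ≤ ε₀/v₁ := by positivity
      linarith
    have hWpos : 0 < W := by linarith
    -- choose k
    have hεW : (0:ℝ) < min (δ/ρ) (1/(ρ*Real.exp W)) := by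
      apply lt_min (by positivity) (by positivity)
    obtain ⟨k, hk⟩ := exists_pow_lt_of_lt_one hεW (by norm_num : ((2:ℝ)⁻¹) < 1)
    have h2k : ((2:ℝ)⁻¹)^k = ((2:ℝ)^k)⁻¹ := inv_pow 2 k
    have h2kpos : (0:ℝ) < (2:ℝ)^k := by positivity
    have hρk0 : (0:ℝ) < ρ/2^k := by positivity
    have hka : ρ/2^k < δ := by
      have h1 : ((2:ℝ)⁻¹)^k < δ/ρ := lt_of_lt_of_le hk (min_le_left _ _)
      calc ρ/2^k = ρ * ((2:ℝ)⁻¹)^k := by rw [h2k]; ring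
        _ < ρ * (δ/ρ) := mul_lt_mul_of_pos_left h1 hρ0
        _ = δ := by field_simp
    set Lk : ℝ := Real.log (1/(ρ/2^k)) with hLkdef
    have hLk : W ≤ Lk := by
      have h2 : ((2:ℝ)⁻¹)^k < 1/(ρ*Real.exp W) := lt_of_lt_of_le hk (min_le_right _ _)
      have hb0 : (0:ℝ) < ρ*Real.exp W := mul_pos hρ0 (Real.exp_pos W)
      have h3 : ρ*Real.exp W < 2^k := by
        rw [h2k, one_div] at h2
        have h4 := mul_pos (sub_pos.2 h2) (mul_pos h2kpos hb0)
        have h5 : (ρ*Real.exp W)⁻¹ * ((2:ℝ)^k * (ρ*Real.exp W)) = (2:ℝ)^k := by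
          field_simp
        have h6 : ((2:ℝ)^k)⁻¹ * ((2:ℝ)^k * (ρ*Real.exp W)) = ρ*Real.exp W := by
          field_simp
        nlinarith only [h4, h5, h6]
      have h7 : Real.exp W ≤ 1/(ρ/2^k) := by
        rw [one_div_div]
        rw [le_div_iff₀ hρ0]
        linarith only [h3]
      calc W = Real.log (Real.exp W) := (Real.log_exp W).symm
        _ ≤ Lk := Real.log_le_log (Real.exp_pos W) h7
    have hLkpos : 0 < Lk := by linarith only [hLk, hW1]
    have hball : ball x (ρ/2^k) ⊆ Ω := subset_trans (ball_subset_ball hka.le) hδ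
    have hinter : ball x (ρ/2^k) ∩ Ω = ball x (ρ/2^k) := inter_eq_left.2 hball
    have hfr : Module.finrank ℝ (EuclideanSpace ℝ (Fin n)) = n := finrank_euclideanSpace_fin
    have hvol : volume (ball x (ρ/2^k)) = ENNReal.ofReal ((ρ/2^k) ^ n) * V₁ := by
      have h := Measure.addHaar_ball volume x hρk0.le
      rw [hfr] at h
      exact h
    have hRHS0 : (0:ℝ) ≤ ε₀*(ρ/2^k)^(n:ℝ)*Lk^(-α) := by positivity
    have hreal2 : (ρ/2^k)^n * v₁ ≤ ε₀*(ρ/2^k)^(n:ℝ)*Lk^(-α) := by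
      have h8 := hind k
      rw [hinter, hvol] at h8
      have h9 := ENNReal.toReal_le_of_le_ofReal hRHS0 h8
      rw [ENNReal.toReal_mul, ENNReal.toReal_ofReal (by positivity)] at h9
      exact h9
    have hcancel : v₁ ≤ ε₀*Lk^(-α) := by
      have hpow : (0:ℝ) < (ρ/2^k)^n := pow_pos hρk0 n
      apply le_of_mul_le_mul_left ?_ hpow
      have e : (ρ/2^k)^(n:ℝ) = (ρ/2^k)^n := Real.rpow_natCast _ n
      calc (ρ/2^k)^n * v₁ ≤ ε₀*(ρ/2^k)^(n:ℝ)*Lk^(-α) := hreal2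
        _ = (ρ/2^k)^n * (ε₀*Lk^(-α)) := by rw [e]; ring
    have hLkα : W ≤ Lk^α := by
      calc W ≤ Lk := hLk
        _ = Lk^(1:ℝ) := (Real.rpow_one _).symm
        _ ≤ Lk^α := Real.rpow_le_rpow_of_exponent_le (le_trans hW1 hLk) hα1
    have hfinal : ε₀*Lk^(-α) < v₁ := by
      have h10 : Lk^(-α) = (Lk^α)⁻¹ := Real.rpow_neg hLkpos.le α
      have h11 : (Lk^α)⁻¹ ≤ W⁻¹ := inv_anti hWpos hLkα
      have hW' : v₁*W = v₁ + ε₀ := by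
        rw [hWdef]
        field_simp
      have h13 : ε₀ < v₁*W := by rw [hW']; linarith only [hv₁pos]
      calc ε₀*Lk^(-α) = ε₀*(Lk^α)⁻¹ := by rw [h10]
        _ ≤ ε₀*W⁻¹ := mul_le_mul_of_nonneg_left h11 hε₀0.le
        _ < (v₁*W)*W⁻¹ := mul_lt_mul_of_pos_right h13 (inv_pos.2 hWpos)
        _ = v₁ := by rw [mul_assoc, mul_inv_cancel₀ (ne_of_gt hWpos), mul_one]
    linarith only [hcancel, hfinal]
  -- final assembly
  have hLρs : Lh ≤ Real.log (1/ρs) := hρsL ρs hρs0 le_rfl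
  have hLρspos : 0 < Real.log (1/ρs) :=
    lt_of_lt_of_le (lt_of_lt_of_le one_pos hLh1) hLρs
  set c₂ : ℝ := ε₀ * ρs^(n:ℝ) * (Real.log (1/ρs))^(-α) with hc₂def
  have hc₂pos : 0 < c₂ := by
    rw [hc₂def]
    positivity
  have hlog2pos : (0:ℝ) < Real.log 2 := Real.log_pos one_lt_two
  set c : ℝ := min (ε₀*(2:ℝ)^(-((n:ℝ)+α))) (c₂*(Real.log 2)^α) with hcdef
  have hc0 : 0 < c := lt_min (by positivity) (by positivity)
  refine ⟨c, hc0, α, hα0, ?_⟩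
  intro x hx R hR
  obtain ⟨hR0, hRh⟩ := hR
  obtain ⟨y, hyΩ, hxy⟩ := Metric.mem_closure_iff.1 hx (R/4) (by linarith only [hR0])
  set R' : ℝ := min (R/2) ρs with hR'def
  have hR'0 : 0 < R' := lt_min (by linarith only [hR0]) hρs0
  have hR'ρs : R' ≤ ρs := min_le_right _ _
  have hR'R2 : R' ≤ R/2 := min_le_left _ _
  have hsub : ball y R' ⊆ ball x R := by
    intro z hz
    rw [mem_ball] at *
    have h1 : dist z x ≤ dist z y + dist y x := dist_triangle z y x
    have h2 : dist y x = dist x y := dist_comm y x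
    linarith only [h1, h2, hz, hxy, hR'R2, hR0]
  have hLR2 : Real.log 2 ≤ Real.log (1/R) := by
    apply Real.log_le_log two_pos
    rw [le_div_iff₀ hR0]
    linarith only [hRh]
  have hLRpos : 0 < Real.log (1/R) := lt_of_lt_of_le hlog2pos hLR2
  have hkey2 : c * R^(n:ℝ) * (Real.log (1/R))^(-α) ≤
      ε₀ * R'^(n:ℝ) * (Real.log (1/R'))^(-α) := by
    rcases le_or_gt (R/2) ρs with hcase | hcase
    · have hR'eq : R' = R/2 := min_eq_left hcase
      rw [hR'eq]
      have h1 : c * R^(n:ℝ) * (Real.log (1/R))^(-α) ≤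
          ε₀ * R^(n:ℝ) * (Real.log (1/R))^(-α) * (2:ℝ)^(-((n:ℝ)+α)) := by
        have h2 : c ≤ ε₀*(2:ℝ)^(-((n:ℝ)+α)) := min_le_left _ _
        have h3 : (0:ℝ) ≤ R^(n:ℝ) * (Real.log (1/R))^(-α) := by positivity
        calc c * R^(n:ℝ) * (Real.log (1/R))^(-α)
            = c * (R^(n:ℝ) * (Real.log (1/R))^(-α)) := by ring
          _ ≤ (ε₀*(2:ℝ)^(-((n:ℝ)+α))) * (R^(n:ℝ) * (Real.log (1/R))^(-α)) :=
              mul_le_mul_of_nonneg_right h2 h3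
          _ = ε₀ * R^(n:ℝ) * (Real.log (1/R))^(-α) * (2:ℝ)^(-((n:ℝ)+α)) := by ring
      exact le_trans h1 (bridge hε₀0.le hα0 hR0 hRh)
    · have hR'eq : R' = ρs := min_eq_right hcase.le
      rw [hR'eq]
      have h1 : R^(n:ℝ) ≤ 1 :=
        Real.rpow_le_one hR0.le (by linarith only [hRh]) (by positivity)
      have h2 : (Real.log (1/R))^(-α) ≤ (Real.log 2)^(-α) :=
        Real.rpow_le_rpow_of_nonpos hlog2pos hLR2 (by linarith only [hα0])
      have h3 : c ≤ c₂*(Real.log 2)^α := min_le_right _ _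
      have h4 : (Real.log 2)^α * (Real.log 2)^(-α) = 1 := by
        rw [← Real.rpow_add hlog2pos, add_neg_cancel, Real.rpow_zero]
      have h5 : c * R^(n:ℝ) ≤ c₂*(Real.log 2)^α := by
        calc c * R^(n:ℝ) ≤ c * 1 := mul_le_mul_of_nonneg_left h1 hc0.le
          _ = c := mul_one c
          _ ≤ c₂*(Real.log 2)^α := h3
      calc c * R^(n:ℝ) * (Real.log (1/R))^(-α)
          ≤ (c₂*(Real.log 2)^α) * (Real.log 2)^(-α) :=
            mul_le_mul h5 h2 (by positivity) (by positivity)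
        _ = c₂ * ((Real.log 2)^α * (Real.log 2)^(-α)) := by ring
        _ = c₂ := by rw [h4, mul_one]
        _ = ε₀ * ρs^(n:ℝ) * (Real.log (1/ρs))^(-α) := hc₂def
  calc ENNReal.ofReal (c * R^(n:ℝ) * (Real.log (1/R))^(-α))
      ≤ ENNReal.ofReal (ε₀ * R'^(n:ℝ) * (Real.log (1/R'))^(-α)) :=
        ENNReal.ofReal_le_ofReal hkey2
    _ ≤ volume (ball y R' ∩ Ω) := propA y hyΩ R' hR'0 hR'ρs
    _ ≤ volume (ball x R ∩ Ω) := measure_mono (inter_subset_inter hsub (subset_refl _))
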